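/- arXiv:2107.06464 — 11 statements merged into one kernel-verified Lean document; each statement's English description precedes it below -/
import Mathlib

section
/- Let q = 2^n and let c be an element of the finite field F_{q^4} with c^{q^2+1} = 1 and c ≠ 1. Then the relative trace Tr from F_{q^4} to F_q of c, namely c + c^q + c^{q^2} + c^{q^3}, is nonzero. (Equivalently, c + c^q + c^{-1} + c^{-q} ≠ 0.) -/
theorem stmt_0 (n : ℕ) (hn : 0 < n) (q : ℕ) (hq : q = 2 ^ n)
    (K : Type*) [Field K] [Fintype K] (hcard : Fintype.card K = q ^ 4)
    (c : K) (hc : c ^ (q ^ 2 + 1) = 1) (hc1 : c ≠ 1) :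
    c + c ^ q + c ^ (q ^ 2) + c ^ (q ^ 3) ≠ 0 := by
  intro hT
  -- characteristic 2
  have h2 : (2 : K) = 0 := by
    have hcz : (Fintype.card K : K) = 0 := FiniteField.cast_card_eq_zero K
    rw [hcard, hq] at hcz
    push_cast at hcz
    have hne : n * 4 ≠ 0 := by positivity
    exact pow_eq_zero_iff (by rw [← pow_mul] at hcz; exact hne) |>.mp
      (by rw [← pow_mul] at hcz; exact hcz)
  have hc0 : c ≠ 0 := by
    intro h
    rw [h, zero_pow (by positivity)] at hc
    exact zero_ne_one hc
  have hcq0 : c ^ q ≠ 0 := pow_ne_zero _ hc0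
  have hmul : c ^ (q ^ 2) * c = 1 := by rw [← pow_succ]; exact hc
  have hinv : c ^ (q ^ 2) = c⁻¹ := eq_inv_of_mul_eq_one_left hmul
  have hq2 : c ^ (q ^ 2) = (c ^ q) ^ q := by rw [← pow_mul, sq]
  have hq3 : c ^ (q ^ 3) = (c ^ q)⁻¹ := by
    have h : c ^ (q ^ 3) = (c ^ (q ^ 2)) ^ q := by rw [← pow_mul, ← pow_succ]
    rw [h, hinv, inv_pow]
  -- contradiction helper
  have hsq : c * c = 1 → False := by
    intro hcc
    have h3 : (c - 1) ^ 2 = 0 := by linear_combination hcc + (1 - c) * h2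
    exact hc1 (sub_eq_zero.mp (pow_eq_zero_iff two_ne_zero |>.mp h3))
  rw [hinv, hq3] at hT
  have key : (c + c ^ q) * (c * c ^ q + 1) = 0 := by
    field_simp at hT
    linear_combination hT
  rcases mul_eq_zero.mp key with h | h
  · -- c^q = c
    have hcq : c ^ q = c := by linear_combination h - c * h2
    have hc2 : c ^ (q ^ 2) = c := by rw [hq2, hcq, hcq]
    have hceq : c⁻¹ = c := by rw [← hinv, hc2]
    have := mul_inv_cancel₀ hc0
    rw [hceq] at this
    exact hsq this
  · -- c^q = c⁻¹
    have hcc' : c * c ^ q = 1 := by linear_combination h - h2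
    have hcq : c ^ q = c⁻¹ := eq_inv_of_mul_eq_one_right hcc'
    have hc2 : c ^ (q ^ 2) = c := by rw [hq2, hcq, inv_pow, hcq, inv_inv]
    have hceq : c⁻¹ = c := by rw [← hinv, hc2]
    have := mul_inv_cancel₀ hc0
    rw [hceq] at this
    exact hsq this
end

section
/- Let q = 2^n. Then gcd(q^3 + q^2 + q - 1, q^4 - 1) = 1; in particular the power map x ↦ x^{q^3+q^2+q-1} is a permutation of F_{q^4}. -/
theorem stmt_1 (n : ℕ) (hn : 0 < n) (q : ℕ) (hq : q = 2 ^ n)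
    (K : Type*) [Field K] [Fintype K] (hcard : Fintype.card K = q ^ 4) :
    Nat.gcd (q ^ 3 + q ^ 2 + q - 1) (q ^ 4 - 1) = 1 ∧
      Function.Bijective (fun x : K => x ^ (q ^ 3 + q ^ 2 + q - 1)) := by
  have hq2 : 2 ≤ q := by
    rw [hq]
    calc 2 = 2 ^ 1 := by norm_num
    _ ≤ 2 ^ n := Nat.pow_le_pow_right (by norm_num) hn
  have hqe : q % 2 = 0 := by
    have : 2 ∣ q := hq ▸ dvd_pow_self 2 hn.ne'
    omega
  set d := q ^ 3 + q ^ 2 + q - 1 with hd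
  set m := q ^ 4 - 1 with hm
  have hq1 : 1 ≤ q ^ 3 + q ^ 2 + q := by nlinarith
  have hq4 : 1 ≤ q ^ 4 := by nlinarith
  have hdodd : d % 2 = 1 := by
    have h3 : q ^ 3 % 2 = 0 := Nat.pow_mod q 3 2 ▸ by simp [hqe]
    have h2 : q ^ 2 % 2 = 0 := Nat.pow_mod q 2 2 ▸ by simp [hqe]
    omega
  -- key: d^2 = (q^2+2q+3) * m + 4
  have hkey : d * d = (q ^ 2 + 2 * q + 3) * m + 4 := by
    have hdz : (d : ℤ) = (q : ℤ) ^ 3 + q ^ 2 + q - 1 := by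
      rw [hd]; push_cast [hq1]; ring
    have hmz : (m : ℤ) = (q : ℤ) ^ 4 - 1 := by
      rw [hm]; push_cast [hq4]; ring
    have : (d : ℤ) * d = ((q : ℤ) ^ 2 + 2 * q + 3) * m + 4 := by
      rw [hdz, hmz]; ring
    exact_mod_cast this
  have hgcd : Nat.gcd d m = 1 := by
    set g := Nat.gcd d m with hg
    have hgd : g ∣ d := Nat.gcd_dvd_left d m
    have hgm : g ∣ m := Nat.gcd_dvd_right d m
    have hg4 : g ∣ 4 := by
      have h1 : g ∣ d * d := hgd.mul_left d
      have h2 : g ∣ (q ^ 2 + 2 * q + 3) * m := hgm.mul_left _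
      have := Nat.dvd_sub h1 h2
      rwa [hkey, Nat.add_sub_cancel_left] at this
    -- g divides 4 and g divides odd d, so g = 1
    have hgle : g ≤ 4 := Nat.le_of_dvd (by norm_num) hg4
    interval_cases g
    all_goals first
      | rfl
      | (obtain ⟨c, hc⟩ := hgd; obtain ⟨e, he⟩ := hg4; omega)
  refine ⟨hgcd, ?_⟩
  have hdpos : 0 < d := by omega
  have hm1 : 1 < m := by
    have : 16 ≤ q ^ 4 := by nlinarith
    omega
  have hpow1 : ∀ x : K, x ≠ 0 → x ^ m = 1 := by
    intro x hx
    have := FiniteField.pow_card_sub_one_eq_one x hx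
    rwa [hcard] at this
  rw [Fintype.bijective_iff_injective_and_card]
  refine ⟨fun x y hxy => ?_, rfl⟩
  simp only at hxy
  by_cases hx : x = 0
  · subst hx
    rw [zero_pow hdpos.ne'] at hxy
    exact (pow_eq_zero_iff hdpos.ne' |>.mp hxy.symm).symm
  · by_cases hy : y = 0
    · subst hy
      rw [zero_pow hdpos.ne'] at hxy
      exact pow_eq_zero_iff hdpos.ne' |>.mp hxy
    · obtain ⟨c, -, hc⟩ := Nat.exists_mul_mod_eq_one_of_coprime hgcd hm1
      have hdc : d * c = m * (d * c / m) + 1 := by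
        have h := Nat.div_add_mod (d * c) m
        rw [hc] at h; omega
      have hxc : ∀ z : K, z ≠ 0 → (z ^ d) ^ c = z := by
        intro z hz
        rw [← pow_mul, hdc, pow_add, pow_mul, hpow1 z hz, one_pow, pow_one, one_mul]
      calc x = (x ^ d) ^ c := (hxc x hx).symm
      _ = (y ^ d) ^ c := by rw [hxy]
      _ = y := hxc y hy
end

section
/- Let n = 2m and let a, b ∈ F_{2^n}^* satisfy Tr_{F_{2^n}/F_2}(b/a^2) = 0. Then the quadratic equation x^2 + a x + b = 0 has both of its solutions in the unit circle μ_{2^m+1} = {x ∈ F_{2^n}^* : x^{2^m+1} = 1} if and only if b = a^{1-2^m} and Tr_{F_{2^m}/F_2}(1/a^{1+2^m}) = 1. -/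
open Finset Polynomial

lemma char2_of_card (K : Type*) [Field K] [Fintype K] {m : ℕ}
    (hcard : Fintype.card K = 2 ^ (2 * m)) : CharP K 2 := by
  have hp : (ringChar K).Prime := CharP.char_is_prime K (ringChar K)
  obtain ⟨n, hn, h⟩ := FiniteField.card K (ringChar K)
  rw [hcard] at h
  have h2 : ringChar K = 2 := by
    have hdvd : ringChar K ∣ 2 ^ (2 * m) := by
      rw [h]; exact dvd_pow_self _ (by exact_mod_cast n.ne_zero)
    exact (Nat.prime_dvd_prime_iff_eq hp Nat.prime_two).mp (hp.dvd_of_dvd_pow hdvd)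
  rw [← h2]; exact ringChar.charP K

lemma artin_pow_two_pow {K : Type*} [CommRing K] [CharP K 2] {u c : K}
    (h : u ^ 2 + u = c) (i : ℕ) :
    u ^ 2 ^ i = u + ∑ j ∈ Finset.range i, c ^ 2 ^ j := by
  haveI : Fact (Nat.Prime 2) := ⟨Nat.prime_two⟩
  have hu2 : u ^ 2 = u + c := by
    linear_combination h - u * (CharTwo.two_eq_zero (R := K))
  induction i with
  | zero => simp
  | succ i ih =>
    rw [pow_succ, pow_mul, ih, CharTwo.add_sq, sum_pow_char, Finset.sum_range_succ', hu2]
    simp only [← pow_mul, ← pow_succ, pow_zero, pow_one]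
    ring

lemma exists_artin_root {K : Type*} [Field K] [Fintype K] [DecidableEq K] [CharP K 2]
    {m : ℕ} (hm : 0 < m) (hcard : Fintype.card K = 2 ^ (2 * m)) (c : K)
    (h : ∑ i ∈ Finset.range (2 * m), c ^ 2 ^ i = 0) : ∃ u : K, u ^ 2 + u = c := by
  haveI : Fact (Nat.Prime 2) := ⟨Nat.prime_two⟩
  have h2z : (2 : K) = 0 := CharTwo.two_eq_zero
  set e : K → K := fun u => u ^ 2 + u with he
  set V : Finset K := Finset.image e Finset.univ with hV
  set S : Finset K := Finset.univ.filter (fun x => ∑ i ∈ Finset.range (2 * m), x ^ 2 ^ i = 0)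
    with hS
  have hVS : V ⊆ S := by
    intro v hv
    obtain ⟨u, -, rfl⟩ := Finset.mem_image.mp hv
    simp only [hS, Finset.mem_filter, Finset.mem_univ, true_and]
    have hterm : ∀ i : ℕ, (e u) ^ 2 ^ i = u ^ 2 ^ (i + 1) - u ^ 2 ^ i := by
      intro i
      rw [CharTwo.sub_eq_add, he]
      show (u ^ 2 + u) ^ 2 ^ i = _
      rw [add_pow_char_pow, ← pow_mul, ← pow_succ']
    calc ∑ i ∈ Finset.range (2 * m), (e u) ^ 2 ^ i
        = ∑ i ∈ Finset.range (2 * m), (u ^ 2 ^ (i + 1) - u ^ 2 ^ i) :=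
          Finset.sum_congr rfl fun i _ => hterm i
      _ = u ^ 2 ^ (2 * m) - u ^ 2 ^ 0 := Finset.sum_range_sub (fun i => u ^ 2 ^ i) (2 * m)
      _ = 0 := by rw [← hcard, FiniteField.pow_card, pow_zero, pow_one, sub_self]
  have hVcard : V.card = 2 ^ (2 * m - 1) := by
    have h1 : (Finset.univ : Finset K).card
        = ∑ v ∈ V, (Finset.univ.filter (fun x => e x = v)).card :=
      Finset.card_eq_sum_card_image e Finset.univ
    have h2 : ∀ v ∈ V, (Finset.univ.filter (fun x => e x = v)).card = 2 := by
      intro v hv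
      obtain ⟨u, -, rfl⟩ := Finset.mem_image.mp hv
      have hfiber : (Finset.univ.filter (fun x => e x = e u)) = {u, u + 1} := by
        ext x
        simp only [Finset.mem_filter, Finset.mem_univ, true_and, Finset.mem_insert,
          Finset.mem_singleton]
        constructor
        · intro hx
          have hsum : e x + e u = 0 := by rw [hx, CharTwo.add_self_eq_zero]
          have hzero : (x + u) * (x + u + 1) = 0 := by
            have hxu : (x + u) * (x + u + 1) = e x + e u := by
              simp only [he]; linear_combination (x * u) * h2z
            rw [hxu, hsum]
          rcases mul_eq_zero.mp hzero with h0 | h0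
          · left; linear_combination h0 - u * h2z
          · right; linear_combination h0 - u * h2z - h2z
        · rintro (rfl | rfl)
          · rfl
          · show e (u + 1) = e u
            simp only [he]; linear_combination (u + 1) * h2z
      rw [hfiber, Finset.card_insert_of_notMem, Finset.card_singleton]
      simp only [Finset.mem_singleton]
      intro hcontra
      exact one_ne_zero (α := K) (by linear_combination -hcontra)
    rw [Finset.card_univ, hcard, Finset.sum_congr rfl h2, Finset.sum_const, smul_eq_mul] at h1
    have h2m : 2 * m = (2 * m - 1) + 1 := by omega
    rw [h2m, pow_succ] at h1
    exact (Nat.eq_of_mul_eq_mul_right (by norm_num) h1.symm)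
  -- the polynomial
  set p : K[X] := ∑ i ∈ Finset.range (2 * m), (X : K[X]) ^ 2 ^ i with hp
  have pne : p ≠ 0 := by
    intro h0
    have hc : p.coeff (2 ^ (2 * m - 1)) = 1 := by
      rw [hp, Polynomial.finset_sum_coeff]
      rw [Finset.sum_eq_single (2 * m - 1)]
      · rw [Polynomial.coeff_X_pow, if_pos rfl]
      · intro i hi hne
        rw [Polynomial.coeff_X_pow, if_neg]
        intro heq
        exact hne (Nat.pow_right_injective le_rfl heq.symm)
      · intro hnm; exact absurd (Finset.mem_range.mpr (by omega)) hnm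
    rw [h0, Polynomial.coeff_zero] at hc
    exact zero_ne_one hc
  have hdeg : p.natDegree ≤ 2 ^ (2 * m - 1) := by
    apply Polynomial.natDegree_sum_le_of_forall_le
    intro i hi
    rw [Polynomial.natDegree_X_pow]
    exact Nat.pow_le_pow_right (by norm_num) (by simp at hi; omega)
  have hSsub : S ⊆ p.roots.toFinset := by
    intro x hx
    simp only [hS, Finset.mem_filter, Finset.mem_univ, true_and] at hx
    rw [Multiset.mem_toFinset, Polynomial.mem_roots pne]
    show p.eval x = 0
    rw [hp, Polynomial.eval_finset_sum]
    simpa using hx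
  have hScard : S.card ≤ 2 ^ (2 * m - 1) := by
    calc S.card ≤ p.roots.toFinset.card := Finset.card_le_card hSsub
      _ ≤ Multiset.card p.roots := Multiset.toFinset_card_le _
      _ ≤ p.natDegree := p.card_roots'
      _ ≤ 2 ^ (2 * m - 1) := hdeg
  have hSV : V = S := Finset.eq_of_subset_of_card_le hVS (hScard.trans_eq hVcard.symm)
  have hcS : c ∈ S := by
    simp only [hS, Finset.mem_filter, Finset.mem_univ, true_and]; exact h
  rw [← hSV] at hcS
  obtain ⟨u, -, hu⟩ := Finset.mem_image.mp hcS
  exact ⟨u, hu⟩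

theorem stmt_4 (m : ℕ) (hm : 0 < m)
    (K : Type*) [Field K] [Fintype K] (hcard : Fintype.card K = 2 ^ (2 * m))
    (a b : K) (ha : a ≠ 0) (hb : b ≠ 0)
    (htr : ∑ i ∈ Finset.range (2 * m), (b / a ^ 2) ^ 2 ^ i = 0) :
    (∃ x y : K, x ≠ y ∧ x ^ 2 + a * x + b = 0 ∧ y ^ 2 + a * y + b = 0 ∧
        x ^ (2 ^ m + 1) = 1 ∧ y ^ (2 ^ m + 1) = 1) ↔
      b = a * (a ^ 2 ^ m)⁻¹ ∧
        ∑ i ∈ Finset.range m, ((a ^ (2 ^ m + 1))⁻¹) ^ 2 ^ i = 1 := by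
  classical
  haveI : CharP K 2 := char2_of_card K hcard
  haveI : Fact (Nat.Prime 2) := ⟨Nat.prime_two⟩
  have h2z : (2 : K) = 0 := CharTwo.two_eq_zero
  have haq : a ^ 2 ^ m ≠ 0 := pow_ne_zero _ ha
  have haq1 : a ^ (2 ^ m + 1) ≠ 0 := pow_ne_zero _ ha
  have hceq : a ^ (2 ^ m + 1) * (a ^ (2 ^ m + 1))⁻¹ = 1 := mul_inv_cancel₀ haq1
  have hfrob : ∀ x : K, x ^ 2 ^ (2 * m) = x := fun x => by
    rw [← hcard]; exact FiniteField.pow_card x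
  set c : K := (a ^ (2 ^ m + 1))⁻¹ with hc
  have hbc_of : b = a * (a ^ 2 ^ m)⁻¹ → b = a ^ 2 * c := by
    intro h1
    rw [h1, hc]
    field_simp
    ring
  constructor
  · rintro ⟨x, y, hxy, hx, hy, hxq, hyq⟩
    have hx0 : x ≠ 0 := by rintro rfl; exact hb (by simpa using hx)
    have hy0 : y ≠ 0 := by rintro rfl; exact hb (by simpa using hy)
    have hxyne : x + y ≠ 0 := by
      intro h0
      exact hxy (by linear_combination h0 - y * h2z)
    have hsum : x + y = a := by
      have h0 : (x + y) * ((x + y) + a) = 0 := by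
        linear_combination hx + hy + (x * y - b) * h2z
      rcases mul_eq_zero.mp h0 with h0 | h0
      · exact absurd h0 hxyne
      · linear_combination h0 - a * h2z
    have hy' : y = x + a := by linear_combination hsum - x * h2z
    have hbxy : b = x * y := by
      rw [hy']
      linear_combination -hx + b * h2z
    have hxq' : x ^ 2 ^ m = x⁻¹ := by
      rw [pow_succ] at hxq
      exact eq_inv_of_mul_eq_one_left (by rw [mul_comm] at hxq ⊢; exact hxq)
    have hyq' : y ^ 2 ^ m = y⁻¹ := by
      rw [pow_succ] at hyq
      exact eq_inv_of_mul_eq_one_left (by rw [mul_comm] at hyq ⊢; exact hyq)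
    have haqeq : a ^ 2 ^ m = x⁻¹ + y⁻¹ := by
      rw [← hsum, add_pow_char_pow, hxq', hyq']
    have hba : b * a ^ 2 ^ m = a := by
      rw [haqeq, hbxy, ← hsum]
      field_simp
      ring
    have hfirst : b = a * (a ^ 2 ^ m)⁻¹ := by
      field_simp
      linear_combination hba
    refine ⟨hfirst, ?_⟩
    have hbc : b = a ^ 2 * c := hbc_of hfirst
    set u : K := x * a⁻¹ with hudef
    have hxau : x = a * u := by rw [hudef]; field_simp
    have hu : u ^ 2 + u = c := by
      have h1 : a ^ 2 * (u ^ 2 + u) = x ^ 2 + a * x := by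
        rw [hudef]; field_simp
      have h2v : x ^ 2 + a * x = a ^ 2 * c := by
        rw [← hbc]; linear_combination -hx + (x ^ 2 + a * x) * h2z
      exact mul_left_cancel₀ (pow_ne_zero 2 ha) (h1.trans h2v)
    have hun0 : u ≠ 0 := by
      rw [hudef]; exact mul_ne_zero hx0 (inv_ne_zero ha)
    set s : K := ∑ j ∈ Finset.range m, c ^ 2 ^ j with hs
    have huq : u ^ 2 ^ m = u + s := artin_pow_two_pow hu m
    have h1 : a ^ (2 ^ m + 1) * ((u + s) * u) = 1 := by
      have heq : x ^ (2 ^ m + 1) = a ^ (2 ^ m + 1) * ((u + s) * u) := by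
        rw [hxau, mul_pow]
        congr 1
        rw [pow_succ, huq]
      rw [← heq, hxq]
    have h2 : (u + s) * u = c := mul_left_cancel₀ haq1 (h1.trans hceq.symm)
    have h3 : u * (s - 1) = 0 := by linear_combination h2 - hu
    rcases mul_eq_zero.mp h3 with h4 | h4
    · exact absurd h4 hun0
    · linear_combination h4
  · rintro ⟨hb1, hs1⟩
    have hbc : b = a ^ 2 * c := hbc_of hb1
    have hcq : c ^ 2 ^ m = c := by
      have hq2 : a ^ (2 ^ m * 2 ^ m) = a := by
        rw [show (2:ℕ) ^ m * 2 ^ m = 2 ^ (2 * m) by rw [two_mul, pow_add]]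
        exact hfrob a
      have hstar : (a ^ (2 ^ m + 1)) ^ 2 ^ m = a ^ (2 ^ m + 1) := by
        rw [← pow_mul, show (2 ^ m + 1) * 2 ^ m = 2 ^ m * 2 ^ m + 2 ^ m by ring,
          pow_add, hq2, pow_succ]
        ring
      rw [hc, inv_pow, hstar]
    have hTc : ∑ i ∈ Finset.range (2 * m), c ^ 2 ^ i = 0 := by
      rw [two_mul, Finset.sum_range_add]
      have : ∀ i ∈ Finset.range m, c ^ 2 ^ (m + i) = c ^ 2 ^ i := by
        intro i _
        rw [pow_add, pow_mul, hcq]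
      rw [Finset.sum_congr rfl this, hs1, CharTwo.add_self_eq_zero]
    obtain ⟨u, hu⟩ := exists_artin_root hm hcard c hTc
    have huq : u ^ 2 ^ m = u + 1 := by
      rw [artin_pow_two_pow hu m, hs1]
    refine ⟨a * u, a * (u + 1), ?_, ?_, ?_, ?_, ?_⟩
    · intro h0
      apply ha
      linear_combination -h0
    · linear_combination a ^ 2 * hu + hbc + (a ^ 2 * c) * h2z
    · linear_combination a ^ 2 * hu + hbc + (a ^ 2 * c + a ^ 2 * u + a ^ 2) * h2z
    · have hupow : u ^ (2 ^ m + 1) = c := by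
        rw [pow_succ, huq]; linear_combination hu
      rw [mul_pow, hupow]; exact hceq
    · have hupow1 : (u + 1) ^ (2 ^ m + 1) = c := by
        rw [pow_succ, add_pow_char_pow, huq, one_pow]
        linear_combination hu + (u + 1) * h2z
      rw [mul_pow, hupow1]; exact hceq
end

section
/- Let n = 2m and let a, b ∈ F_{2^n}^* satisfy Tr_{F_{2^n}/F_2}(b/a^2) = 0. Then x^2 + a x + b = 0 has exactly one solution in the unit circle μ_{2^m+1} if and only if b ≠ a^{1-2^m} and (1 + b^{1+2^m})(1 + a^{1+2^m} + b^{1+2^m}) + a^2 b^{2^m} + a^{2^{m+1}} b = 0. -/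
theorem stmt_5 (m : ℕ) (hm : 0 < m)
    (K : Type*) [Field K] [Fintype K] (hcard : Fintype.card K = 2 ^ (2 * m))
    (a b : K) (ha : a ≠ 0) (hb : b ≠ 0)
    (htr : ∑ i ∈ Finset.range (2 * m), (b / a ^ 2) ^ 2 ^ i = 0) :
    (∃! x : K, x ^ 2 + a * x + b = 0 ∧ x ^ (2 ^ m + 1) = 1) ↔
      b ≠ a * (a ^ 2 ^ m)⁻¹ ∧
        (1 + b ^ (2 ^ m + 1)) * (1 + a ^ (2 ^ m + 1) + b ^ (2 ^ m + 1)) +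
            a ^ 2 * b ^ 2 ^ m + a ^ 2 ^ (m + 1) * b = 0 := by
  -- characteristic 2
  have htwo : (2 : K) = 0 := by
    have h0 : ((Fintype.card K : ℕ) : K) = 0 := FiniteField.cast_card_eq_zero K
    rw [hcard] at h0
    push_cast at h0
    exact pow_eq_zero_iff (by positivity) |>.mp h0
  -- Frobenius is additive
  have frob : ∀ k : ℕ, ∀ x y : K, (x + y) ^ 2 ^ k = x ^ 2 ^ k + y ^ 2 ^ k := by
    intro k
    induction k with
    | zero => intro x y; simp
    | succ k ih =>
      intro x y
      rw [pow_succ 2 k, pow_mul, pow_mul, pow_mul, ih]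
      linear_combination (x ^ 2 ^ k * y ^ 2 ^ k) * htwo
  -- x ^ (2^m) is an involution (x^(q^2) = x)
  have hqq : ∀ x : K, (x ^ 2 ^ m) ^ 2 ^ m = x := by
    intro x
    calc (x ^ 2 ^ m) ^ 2 ^ m = x ^ (2 ^ m * 2 ^ m) := (pow_mul x _ _).symm
    _ = x ^ 2 ^ (2 * m) := by rw [← pow_add, two_mul]
    _ = x := by rw [← hcard]; exact FiniteField.pow_card x
  set A := a ^ 2 ^ m with hAdef
  set B := b ^ 2 ^ m with hBdef
  have hA0 : A ≠ 0 := pow_ne_zero _ ha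
  have hB0 : B ≠ 0 := pow_ne_zero _ hb
  have hAq : A ^ 2 ^ m = a := hqq a
  have hBq : B ^ 2 ^ m = b := hqq b
  -- rewrite statement exponents
  have ea : a ^ (2 ^ m + 1) = A * a := pow_succ a (2 ^ m)
  have eb : b ^ (2 ^ m + 1) = B * b := pow_succ b (2 ^ m)
  have ea2 : a ^ 2 ^ (m + 1) = A ^ 2 := by
    rw [pow_succ 2 m, pow_mul]
  -- Frobenius of a root
  have frobroot : ∀ x : K, x ^ 2 + a * x + b = 0 →
      (x ^ 2 ^ m) ^ 2 + A * x ^ 2 ^ m + B = 0 := by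
    intro x h1
    have e1 : (x ^ 2 + a * x + b) ^ 2 ^ m = 0 := by
      rw [h1]; exact zero_pow (by positivity)
    rw [frob m (x ^ 2 + a * x) b, frob m (x ^ 2) (a * x), mul_pow] at e1
    rw [show (x ^ 2) ^ 2 ^ m = (x ^ 2 ^ m) ^ 2 by
      rw [← pow_mul, ← pow_mul, mul_comm]] at e1
    exact e1
  -- key: a root in the unit circle satisfies a linear equation
  have key : ∀ x : K, x ^ 2 + a * x + b = 0 → x ^ 2 ^ m * x = 1 →
      x * (A + a * B) = 1 + b * B := by
    intro x h1 h3
    have h2f := frobroot x h1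
    linear_combination x ^ 2 * h2f + B * h1 - (x * x ^ 2 ^ m + 1 + A * x) * h3 -
      (1 + b * B + B * (x ^ 2)) * htwo
  -- c ≠ 0 when b ≠ a * A⁻¹
  have hcne : b ≠ a * A⁻¹ → A + a * B ≠ 0 := by
    intro hne hc
    apply hne
    have hA' : A = a * B := by linear_combination hc - a * B * htwo
    have hA'' : a = A * b := by
      have := congrArg (· ^ 2 ^ m) hA'
      simp only [mul_pow, hAq, hBq] at this
      exact this
    rw [← div_eq_mul_inv, eq_div_iff hA0]
    linear_combination -hA''
  -- also: a + A*b ≠ 0 when b ≠ a * A⁻¹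
  have hdne : b ≠ a * A⁻¹ → a + A * b ≠ 0 := by
    intro hne hd
    apply hne
    rw [← div_eq_mul_inv, eq_div_iff hA0]
    linear_combination -hd + A * b * htwo
  constructor
  · rintro ⟨x, ⟨h1, h3'⟩, huniq⟩
    rw [pow_succ] at h3'
    have hX0 : x ^ 2 ^ m ≠ 0 := by
      intro h; rw [h, zero_mul] at h3'; exact zero_ne_one h3'
    have h2f := frobroot x h1
    -- first: b ≠ a * A⁻¹
    have hbne : b ≠ a * A⁻¹ := by
      intro hbeq
      have hab : b * A = a := by
        rw [hbeq, ← div_eq_mul_inv, div_mul_cancel₀ _ hA0]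
      have haB : a * B = A := by
        have := congrArg (· ^ 2 ^ m) hab
        simp only [mul_pow, hAq, hBq] at this
        linear_combination this
      -- then y = x + a is another root in the unit circle
      have hy1 : (x + a) ^ 2 + a * (x + a) + b = 0 := by
        linear_combination h1 + (a * x + a ^ 2) * htwo
      have hprod : (a * x ^ 2 ^ m + A * x + a * A) * x ^ 2 ^ m = 0 := by
        linear_combination a * h2f + A * h3' - haB
      have hsum : a * x ^ 2 ^ m + A * x + a * A = 0 :=
        (mul_eq_zero.mp hprod).resolve_right hX0
      have hy3 : (x + a) ^ (2 ^ m + 1) = 1 := by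
        rw [pow_succ, frob m x a]
        linear_combination h3' + hsum
      have := huniq (x + a) ⟨hy1, hy3⟩
      have : a = 0 := by linear_combination this - 0
      exact ha this
    refine ⟨hbne, ?_⟩
    rw [ea, eb, ea2]
    have hx := key x h1 h3'
    linear_combination (A + a * B) ^ 2 * h1 +
      (x * (A + a * B) + (1 + b * B) + a * (A + a * B)) * hx +
      (1 - A ^ 2 * x ^ 2 + 2 * b * B + b ^ 2 * B ^ 2 + a * A - 2 * a * A * B * x ^ 2 -
        a * A ^ 2 * x + a ^ 2 * B - a ^ 2 * B ^ 2 * x ^ 2 - 2 * a ^ 2 * A * B * x -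
        a ^ 3 * B ^ 2 * x) * htwo
  · rintro ⟨hbne, hE⟩
    rw [ea, eb, ea2] at hE
    have hc0 : A + a * B ≠ 0 := hcne hbne
    have hd0 : a + A * b ≠ 0 := hdne hbne
    set x₀ : K := (1 + b * B) / (A + a * B) with hx₀
    have hx₀c : x₀ * (A + a * B) = 1 + b * B := div_mul_cancel₀ _ hc0
    have hroot : x₀ ^ 2 + a * x₀ + b = 0 := by
      have e : (A + a * B) ^ 2 * (x₀ ^ 2 + a * x₀ + b) =
          (x₀ * (A + a * B)) ^ 2 + a * (x₀ * (A + a * B)) * (A + a * B) +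
            b * (A + a * B) ^ 2 := by ring
      rw [hx₀c] at e
      have e2 : (A + a * B) ^ 2 * (x₀ ^ 2 + a * x₀ + b) = 0 := by
        rw [e]
        linear_combination hE + (a * b * A * B + a ^ 2 * b * B ^ 2) * htwo
      exact (mul_eq_zero.mp e2).resolve_left (pow_ne_zero 2 hc0)
    have hfr : x₀ ^ 2 ^ m = (1 + b * B) / (a + A * b) := by
      rw [hx₀, div_pow, frob m 1 (b * B), one_pow, mul_pow, hBq,
        frob m A (a * B), hAq, mul_pow, hBq]
      rw [← hAdef, ← hBdef]
      ring_nf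
    have hmu : x₀ ^ (2 ^ m + 1) = 1 := by
      rw [pow_succ, hfr, hx₀, div_mul_div_comm, div_eq_one_iff_eq (by
        exact mul_ne_zero hd0 hc0)]
      linear_combination hE - (b * A ^ 2 + a * A + a * b * A * B + a ^ 2 * B) * htwo
    refine ⟨x₀, ⟨hroot, hmu⟩, ?_⟩
    rintro y ⟨hy1, hy3⟩
    rw [pow_succ] at hy3
    have hy := key y hy1 hy3
    have : y * (A + a * B) = x₀ * (A + a * B) := by rw [hy, hx₀c]
    exact mul_right_cancel₀ hc0 this
end

section
/- Let q = 2^n and c ∈ F_{q^4} with c^{q^2+1} = 1, c ≠ 1. Write Tr for the relative trace from F_{q^4} to F_q. For v ∈ F_{q^4}, if Tr(c v^{1+q}) · Tr(c^{1+q} v^{2q}) ≠ 0, then the absolute trace from F_q to F_2 of Tr(c v^{1+q}) / Tr(c^{1+q} v^{2q}) equals 1. -/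
set_option maxHeartbeats 1000000

/-- The relative trace from `F_{q^4}` to `F_q`, computed in the big field. -/
def Tr4 {K : Type*} [Field K] (q : ℕ) (x : K) : K :=
  x + x ^ q + x ^ (q ^ 2) + x ^ (q ^ 3)

theorem stmt_8 (n : ℕ) (hn : 0 < n) (q : ℕ) (hq : q = 2 ^ n)
    (K : Type*) [Field K] [Fintype K] (hcard : Fintype.card K = q ^ 4)
    (c : K) (hc : c ^ (q ^ 2 + 1) = 1) (hc1 : c ≠ 1) (v : K)
    (h : Tr4 q (c * v ^ (1 + q)) * Tr4 q (c ^ (1 + q) * v ^ (2 * q)) ≠ 0) :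
    ∑ i ∈ Finset.range n,
        (Tr4 q (c * v ^ (1 + q)) / Tr4 q (c ^ (1 + q) * v ^ (2 * q))) ^ 2 ^ i = 1 := by
  haveI hfact2 : Fact (Nat.Prime 2) := ⟨Nat.prime_two⟩
  -- characteristic 2
  haveI hchar : CharP K 2 := by
    have hp := ringChar.charP K
    have hprime : (ringChar K).Prime := CharP.char_is_prime K (ringChar K)
    haveI := Fact.mk hprime
    obtain ⟨m, _, hm⟩ := FiniteField.card K (ringChar K)
    have h24 : ringChar K ^ (m : ℕ) = 2 ^ (n * 4) := by
      rw [← hm, hcard, hq, ← pow_mul]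
    have hdvd : ringChar K ∣ 2 ^ (n * 4) := by
      rw [← h24]; exact dvd_pow_self _ (by exact_mod_cast m.2.ne')
    have : ringChar K = 2 :=
      (Nat.prime_dvd_prime_iff_eq hprime Nat.prime_two).mp
        (hprime.dvd_of_dvd_pow hdvd)
    rwa [this] at hp
  have hfq : ∀ x y : K, (x + y) ^ q = x ^ q + y ^ q := by
    intro x y; rw [hq]; exact add_pow_char_pow x y 2 n
  have hsqq : ∀ x : K, (x ^ 2) ^ q = (x ^ q) ^ 2 := by
    intro x; rw [← pow_mul, mul_comm, pow_mul]
  -- basic nonvanishing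
  have hAne : Tr4 q (c * v ^ (1 + q)) ≠ 0 := left_ne_zero_of_mul h
  have hBne : Tr4 q (c ^ (1 + q) * v ^ (2 * q)) ≠ 0 := right_ne_zero_of_mul h
  have hc0 : c ≠ 0 := by
    intro h0
    rw [h0, zero_pow (by positivity)] at hc
    exact zero_ne_one hc
  have hcq2 : c ^ (q ^ 2) = c⁻¹ := by
    have h1 : c ^ (q ^ 2) * c = 1 := by rw [← pow_succ]; exact hc
    exact eq_inv_of_mul_eq_one_left h1
  have hv4 : v ^ (q ^ 4) = v := by
    have := FiniteField.pow_card v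
    rwa [hcard] at this
  -- opaque abbreviations
  obtain ⟨c1, ec1⟩ : ∃ y : K, c ^ q = y := ⟨_, rfl⟩
  obtain ⟨v1, ev1⟩ : ∃ y : K, v ^ q = y := ⟨_, rfl⟩
  obtain ⟨v2, ev2⟩ : ∃ y : K, v1 ^ q = y := ⟨_, rfl⟩
  obtain ⟨v3, ev3⟩ : ∃ y : K, v2 ^ q = y := ⟨_, rfl⟩
  have hc1ne : c1 ≠ 0 := by rw [← ec1]; exact pow_ne_zero _ hc0
  have ecc : c1 ^ q = c⁻¹ := by
    rw [← ec1, ← pow_mul, show q * q = q ^ 2 by ring, hcq2]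
  have eci : (c⁻¹ : K) ^ q = c1⁻¹ := by rw [inv_pow, ec1]
  have eic1 : (c1⁻¹ : K) ^ q = c := by rw [inv_pow, ecc, inv_inv]
  have ev0 : v3 ^ q = v := by
    have e : v3 ^ q = v ^ (q ^ 4) := by
      rw [← ev3, ← ev2, ← ev1, ← pow_mul, ← pow_mul, ← pow_mul]
      congr 1
      ring
    rw [e, hv4]
  -- Tr4 via iterated q-powers
  have hTr : ∀ x : K, Tr4 q x = x + x ^ q + (x ^ q) ^ q + ((x ^ q) ^ q) ^ q := by
    intro x
    unfold Tr4
    rw [show q ^ 3 = q * q * q by ring, show q ^ 2 = q * q by ring,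
      pow_mul x (q * q) q, pow_mul x q q]
  -- the witness data
  obtain ⟨μ, eμ⟩ : ∃ y : K, c * v + c1 * v2 = y := ⟨_, rfl⟩
  have hμq : μ ^ q = c1 * v1 + c⁻¹ * v3 := by
    rw [← eμ, hfq, mul_pow, mul_pow, ec1, ev1, ecc, ev3]
  have hμqq : (μ ^ q) ^ q = c⁻¹ * v2 + c1⁻¹ * v := by
    rw [hμq, hfq, mul_pow, mul_pow, ecc, ev2, eci, ev0]
  obtain ⟨D, eD⟩ : ∃ y : K, μ + c * μ ^ q = y := ⟨_, rfl⟩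
  have hDq : D ^ q = c⁻¹ * D := by
    rw [← eD, hfq, mul_pow, ec1, hμqq, hμq, ← eμ]
    field_simp
    ring
  -- expansion of A
  have hA : c1 * Tr4 q (c * v ^ (1 + q)) = μ * μ ^ q := by
    have hX : c * v ^ (1 + q) = (c * v) * v1 := by
      rw [pow_add, pow_one, ev1]; ring
    have h1 : ((c * v) * v1) ^ q = (c1 * v1) * v2 := by
      rw [mul_pow, mul_pow, ec1, ev1, ev2]
    have h2 : ((c1 * v1) * v2) ^ q = (c⁻¹ * v2) * v3 := by
      rw [mul_pow, mul_pow, ecc, ev2, ev3]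
    have h3 : ((c⁻¹ * v2) * v3) ^ q = (c1⁻¹ * v3) * v := by
      rw [mul_pow, mul_pow, eci, ev3, ev0]
    rw [hTr, hX, h1, h2, h3, hμq, ← eμ]
    field_simp
    ring
  -- expansion of B
  have hB : (c * c1) * Tr4 q (c ^ (1 + q) * v ^ (2 * q)) = D ^ 2 := by
    have hY : c ^ (1 + q) * v ^ (2 * q) = (c * c1) * v1 ^ 2 := by
      rw [pow_add, pow_one, show 2 * q = q * 2 by ring, pow_mul, ec1, ev1]
    have h1 : ((c * c1) * v1 ^ 2) ^ q = (c1 * c⁻¹) * v2 ^ 2 := by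
      rw [mul_pow, mul_pow, hsqq, ec1, ecc, ev2]
    have h2 : ((c1 * c⁻¹) * v2 ^ 2) ^ q = (c⁻¹ * c1⁻¹) * v3 ^ 2 := by
      rw [mul_pow, mul_pow, hsqq, ecc, eci, ev3]
    have h3 : ((c⁻¹ * c1⁻¹) * v3 ^ 2) ^ q = (c1⁻¹ * c) * v ^ 2 := by
      rw [mul_pow, mul_pow, hsqq, eci, eic1, ev0]
    have hD2 : D ^ 2 = (c * v) ^ 2 + (c1 * v2) ^ 2
        + c ^ 2 * ((c1 * v1) ^ 2 + (c⁻¹ * v3) ^ 2) := by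
      rw [← eD, CharTwo.add_sq, mul_pow, hμq, ← eμ, CharTwo.add_sq, CharTwo.add_sq]
    rw [hTr, hY, h1, h2, h3, hD2]
    field_simp
    ring
  have hDne : D ≠ 0 := by
    intro h0
    rw [h0] at hB
    exact (mul_ne_zero (mul_ne_zero hc0 hc1ne) hBne) (by rw [hB]; ring)
  obtain ⟨w, ew⟩ : ∃ y : K, μ / D = y := ⟨_, rfl⟩
  have hμD : μ + D = c * μ ^ q := by
    rw [← eD, ← add_assoc, CharTwo.add_self_eq_zero, zero_add]
  have hwq : w ^ q = w + 1 := by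
    have e1 : w ^ q = μ ^ q / (c⁻¹ * D) := by rw [← ew, div_pow, hDq]
    have e2 : μ ^ q / (c⁻¹ * D) = (c * μ ^ q) / D := by
      field_simp
    rw [e1, e2, ← hμD, add_div, div_self hDne, ew]
  have hab : Tr4 q (c * v ^ (1 + q)) / Tr4 q (c ^ (1 + q) * v ^ (2 * q)) = w ^ 2 + w := by
    have e1 : Tr4 q (c * v ^ (1 + q)) = μ * μ ^ q / c1 := by
      rw [eq_div_iff hc1ne]; linear_combination hA
    have e2 : Tr4 q (c ^ (1 + q) * v ^ (2 * q)) = D ^ 2 / (c * c1) := by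
      rw [eq_div_iff (mul_ne_zero hc0 hc1ne)]; linear_combination hB
    have e3 : w ^ 2 + w = w * (w + 1) := by ring
    rw [e1, e2, e3, ← hwq, ← ew, div_pow, hDq]
    field_simp
  rw [hab]
  have hterm : ∀ i : ℕ, (w ^ 2 + w) ^ 2 ^ i =
      (fun j => w ^ 2 ^ j) (i + 1) - (fun j => w ^ 2 ^ j) i := by
    intro i
    simp only
    rw [CharTwo.sub_eq_add, add_pow_char_pow (w ^ 2) w 2 i, ← pow_mul, ← pow_succ']
  calc ∑ i ∈ Finset.range n, (w ^ 2 + w) ^ 2 ^ i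
      = ∑ i ∈ Finset.range n, ((fun j => w ^ 2 ^ j) (i + 1) - (fun j => w ^ 2 ^ j) i) :=
        Finset.sum_congr rfl fun i _ => hterm i
    _ = w ^ 2 ^ n - w ^ 2 ^ 0 := Finset.sum_range_sub (fun j => w ^ 2 ^ j) n
    _ = 1 := by rw [← hq, pow_zero, pow_one, hwq]; ring
end

section
/- Let q = 2^n and c ∈ F_{q^4} with c^{q^2+1} = 1, c ≠ 1. For b ∈ F_{q^4} with b^{1+q^2} = 1, set v = b^q + b^{q^2}. If Tr_{F_{q^4}/F_q}(c v^{1+q}) = 0, then b ∈ {1, c}. -/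
lemma tr4_aux {K : Type*} [Field K] (b B c C bi Bi ci Ci : K)
    (hbi : b * bi = 1) (hBi : B * Bi = 1) (hci : c * ci = 1) (hCi : C * Ci = 1) :
    b ^ 2 * B ^ 2 * c * C *
      (c * ((B + bi) * (bi + Bi)) + C * ((bi + Bi) * (Bi + b))
        + ci * ((Bi + b) * (b + B)) + Ci * ((b + B) * (B + bi)))
    = (b + B) * (1 + b * B) * (B * c + b * C) * (c * C + b * B) := by
  linear_combination
    (B^2*c^2*C + b*B^2*c*C^2*Bi + b*B^2*c^2*C*Bi + b*B^2*c^2*C*bi + b*B^3*c*C*Ci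
      + b*B^3*c^2*C + b^2*B^2*c*C*Ci + b^2*B^2*c*C^2) * hbi +
    (b*B*c*C^2 + b*B*c^2*C + b^2*c*C^2 + b^2*B*c*C^2*Bi + b^2*B^2*c*C*ci
      + b^2*B^2*c^2*C + b^3*B*c*C*ci + b^3*B*c*C^2) * hBi +
    (b^2*B^2*C + b^3*B*C + b^3*B^3*C + b^4*B^2*C) * hci +
    (b*B^3*c + b^2*B^2*c + b^2*B^4*c + b^3*B^3*c) * hCi

theorem stmt_9 (n : ℕ) (hn : 0 < n) (q : ℕ) (hq : q = 2 ^ n)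
    (K : Type*) [Field K] [Fintype K] (hcard : Fintype.card K = q ^ 4)
    (c : K) (hc : c ^ (q ^ 2 + 1) = 1) (hc1 : c ≠ 1)
    (b : K) (hb : b ^ (1 + q ^ 2) = 1)
    (h : Tr4 q (c * (b ^ q + b ^ (q ^ 2)) ^ (1 + q)) = 0) :
    b = 1 ∨ b = c := by
  -- characteristic 2
  have hchar2 : CharP K 2 := by
    obtain ⟨m, hp, hm⟩ := FiniteField.card K (ringChar K)
    have h2 : ringChar K = 2 := by
      have hd : ringChar K ∣ 2 ^ (n * 4) := by
        rw [pow_mul, ← hq, ← hcard, hm]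
        exact dvd_pow_self _ m.2.ne'
      have := hp.dvd_of_dvd_pow hd
      exact (Nat.prime_dvd_prime_iff_eq hp Nat.prime_two).mp this
    rw [← h2]; exact ringChar.charP K
  haveI := hchar2
  haveI : Fact (Nat.Prime 2) := ⟨Nat.prime_two⟩
  have hq0 : q ≠ 0 := by rw [hq]; positivity
  -- Frobenius additivity and injectivity
  have frob : ∀ x y : K, (x + y) ^ q = x ^ q + y ^ q := by
    intro x y; rw [hq]; exact add_pow_char_pow x y 2 n
  have two0 : ∀ x : K, x + x = 0 := by
    intro x
    rw [← two_mul, (by norm_num : (2 : K) = ((2 : ℕ) : K)), CharP.cast_eq_zero K 2, zero_mul]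
  have frob_inj : ∀ x y : K, x ^ q = y ^ q → x = y := by
    intro x y hxy
    have h1 : (x + y) ^ q = 0 := by rw [frob, hxy, two0]
    have h2 : x + y = 0 := pow_eq_zero_iff hq0 |>.mp h1
    have hxy2 : x = -y := by linear_combination h2
    rwa [CharTwo.neg_eq] at hxy2
  have sq_inj : ∀ x y : K, x ^ 2 = y ^ 2 → x = y := by
    intro x y hxy
    have h1 : (x + y) ^ 2 = 0 := by
      linear_combination hxy + two0 (x * y) + two0 (y ^ 2)
    have h2 : x + y = 0 := pow_eq_zero_iff two_ne_zero |>.mp h1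
    have hxy2 : x = -y := by linear_combination h2
    rwa [CharTwo.neg_eq] at hxy2
  -- nonvanishing
  have hb0 : b ≠ 0 := by
    intro h0; rw [h0, zero_pow (by positivity)] at hb; exact one_ne_zero hb.symm
  have hc0 : c ≠ 0 := by
    intro h0; rw [h0, zero_pow (by positivity)] at hc; exact one_ne_zero hc.symm
  -- conjugates of b and c
  have hbq2' : b ^ q ^ 2 = b⁻¹ := by
    refine eq_inv_of_mul_eq_one_left ?_
    rw [← pow_succ, add_comm (q ^ 2) 1]; exact hb
  have hcq2' : c ^ q ^ 2 = c⁻¹ := by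
    refine eq_inv_of_mul_eq_one_left ?_
    rw [← pow_succ]; exact hc
  obtain ⟨B, hB⟩ : ∃ x : K, b ^ q = x := ⟨_, rfl⟩
  obtain ⟨C, hC⟩ : ∃ x : K, c ^ q = x := ⟨_, rfl⟩
  have hbq2 : B ^ q = b⁻¹ := by
    rw [← hB, ← pow_mul, ← pow_two]; exact hbq2'
  have hcq2 : C ^ q = c⁻¹ := by
    rw [← hC, ← pow_mul, ← pow_two]; exact hcq2'
  have hB0 : B ≠ 0 := by rw [← hB]; exact pow_ne_zero _ hb0
  have hC0 : C ≠ 0 := by rw [← hC]; exact pow_ne_zero _ hc0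
  have hbiq : (b⁻¹) ^ q = B⁻¹ := by rw [inv_pow, hB]
  have hBiq : (B⁻¹) ^ q = b := by rw [inv_pow, hbq2, inv_inv]
  have hciq : (c⁻¹) ^ q = C⁻¹ := by rw [inv_pow, hC]
  have hCiq : (C⁻¹) ^ q = c := by rw [inv_pow, hcq2, inv_inv]
  -- rewrite the trace argument and its conjugates
  have hX : c * (b ^ q + b ^ q ^ 2) ^ (1 + q) = c * ((B + b⁻¹) * (b⁻¹ + B⁻¹)) := by
    rw [hbq2', hB, pow_add, pow_one, frob, hbq2, hbiq]
  have hXq : (c * ((B + b⁻¹) * (b⁻¹ + B⁻¹))) ^ q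
      = C * ((b⁻¹ + B⁻¹) * (B⁻¹ + b)) := by
    rw [mul_pow, mul_pow, frob, frob, hbq2, hbiq, hBiq, hC]
  have hXq2 : (C * ((b⁻¹ + B⁻¹) * (B⁻¹ + b))) ^ q
      = c⁻¹ * ((B⁻¹ + b) * (b + B)) := by
    rw [mul_pow, mul_pow, frob, frob, hbiq, hBiq, hcq2, hB]
  have hXq3 : (c⁻¹ * ((B⁻¹ + b) * (b + B))) ^ q
      = C⁻¹ * ((b + B) * (B + b⁻¹)) := by
    rw [mul_pow, mul_pow, frob, frob, hBiq, hciq, hbq2, hB]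
  have hTr : Tr4 q (c * (b ^ q + b ^ q ^ 2) ^ (1 + q))
      = c * ((B + b⁻¹) * (b⁻¹ + B⁻¹)) + C * ((b⁻¹ + B⁻¹) * (B⁻¹ + b))
        + c⁻¹ * ((B⁻¹ + b) * (b + B)) + C⁻¹ * ((b + B) * (B + b⁻¹)) := by
    unfold Tr4
    rw [hX]
    rw [show (c * ((B + b⁻¹) * (b⁻¹ + B⁻¹))) ^ q ^ 2
        = ((c * ((B + b⁻¹) * (b⁻¹ + B⁻¹))) ^ q) ^ q by
          rw [show q ^ 2 = q * q from sq q, pow_mul]]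
    rw [show (c * ((B + b⁻¹) * (b⁻¹ + B⁻¹))) ^ q ^ 3
        = (((c * ((B + b⁻¹) * (b⁻¹ + B⁻¹))) ^ q) ^ q) ^ q by
          rw [show q ^ 3 = q * q * q from by ring, pow_mul, pow_mul]]
    rw [hXq, hXq2, hXq3]
  -- the key factorized identity
  have h2 : c * ((B + b⁻¹) * (b⁻¹ + B⁻¹)) + C * ((b⁻¹ + B⁻¹) * (B⁻¹ + b))
      + c⁻¹ * ((B⁻¹ + b) * (b + B)) + C⁻¹ * ((b + B) * (B + b⁻¹)) = 0 := by
    rw [← hTr]; exact h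
  have hmain := tr4_aux b B c C b⁻¹ B⁻¹ c⁻¹ C⁻¹ (mul_inv_cancel₀ hb0)
    (mul_inv_cancel₀ hB0) (mul_inv_cancel₀ hc0) (mul_inv_cancel₀ hC0)
  have key : (b + B) * (1 + b * B) * (B * c + b * C) * (c * C + b * B) = 0 := by
    rw [← hmain, h2, mul_zero]
  -- helper for cases 3 and 4
  have pair : ∀ _ : B * c = b * C, ∀ _ : b * B = c * C, b = c := by
    intro e1 e2
    have e3 : b ^ 2 * (B * C) = c ^ 2 * (B * C) := by
      linear_combination (-(b * B)) * e1 + (B * c) * e2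
    have := mul_right_cancel₀ (mul_ne_zero hB0 hC0) e3
    exact sq_inj _ _ this
  rcases mul_eq_zero.mp key with h4 | h4
  · rcases mul_eq_zero.mp h4 with h5 | h5
    · rcases mul_eq_zero.mp h5 with h6 | h6
      · -- b + B = 0
        left
        have hBb : B = b := by
          have : B = -b := by linear_combination h6
          rwa [CharTwo.neg_eq] at this
        have e : b = b⁻¹ := by rw [hBb] at hB; rw [hBb, hB] at hbq2; exact hbq2
        have hb2 : b ^ 2 = 1 ^ 2 := by
          rw [one_pow, pow_two]; nth_rewrite 2 [e]; exact mul_inv_cancel₀ hb0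
        exact sq_inj _ _ hb2
      · -- 1 + b * B = 0
        left
        have hbB : b * B = 1 := by linear_combination h6 - two0 1
        have hBb : B = b⁻¹ := eq_inv_of_mul_eq_one_right hbB
        have hq' : B ^ q = b ^ q := by rw [hbq2, ← hBb, ← hB]
        have hBb' : B = b := frob_inj _ _ hq'
        have hb2 : b ^ 2 = 1 ^ 2 := by
          rw [one_pow, pow_two]; rw [hBb'] at hbB; exact hbB
        exact sq_inj _ _ hb2
    · -- B * c + b * C = 0
      right
      have e1 : B * c = b * C := by linear_combination h5 - two0 (b * C)
      have e2 : b * B = c * C := by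
        have hfr : B ^ q * c ^ q = b ^ q * C ^ q := by
          rw [← mul_pow, ← mul_pow, e1]
        rw [hbq2, hC, hB, hcq2] at hfr
        -- hfr : b⁻¹ * C = B * c⁻¹
        have h8 : (b⁻¹ * C) * (b * c) = c * C := by field_simp
        have h9 : (B * c⁻¹) * (b * c) = b * B := by field_simp
        rw [← h9, ← hfr, h8]
      exact pair e1 e2
  · -- c * C + b * B = 0
    right
    have e2 : b * B = c * C := by linear_combination h4 - two0 (c * C)
    have e1 : B * c = b * C := by
      have hfr : b ^ q * B ^ q = c ^ q * C ^ q := by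
        rw [← mul_pow, ← mul_pow, e2]
      rw [hbq2, hC, hB, hcq2] at hfr
      -- hfr : B * b⁻¹ = C * c⁻¹
      have h8 : (B * b⁻¹) * (b * c) = B * c := by field_simp
      have h9 : (C * c⁻¹) * (b * c) = b * C := by field_simp
      rw [← h8, hfr, h9]
    exact pair e1 e2
end

section
/- Let q = 2^n and c ∈ F_{q^4} with c^{q^2+1} = 1, c ≠ 1. Write c = d^2 with d^{1+q^2} = 1. Then for all v ∈ F_{q^4}, Tr_{F_{q^4}/F_q}(c v^{q+1}) = ν^{1+q} and Tr_{F_{q^4}/F_q}(c^{1+q} v^{2q}) = (ν + ν^q)^2, where ν = d^{1+q^3} v + d^{q^2+q} v^{q^2} ∈ F_{q^2}. -/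
theorem stmt_10 (n : ℕ) (hn : 0 < n) (q : ℕ) (hq : q = 2 ^ n)
    (K : Type*) [Field K] [Fintype K] (hcard : Fintype.card K = q ^ 4)
    (c : K) (hc : c ^ (q ^ 2 + 1) = 1) (hc1 : c ≠ 1)
    (d : K) (hd : d ^ 2 = c) (hd1 : d ^ (1 + q ^ 2) = 1)
    (v : K) :
    (d ^ (1 + q ^ 3) * v + d ^ (q ^ 2 + q) * v ^ (q ^ 2)) ^ (q ^ 2) =
        d ^ (1 + q ^ 3) * v + d ^ (q ^ 2 + q) * v ^ (q ^ 2) ∧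
    Tr4 q (c * v ^ (q + 1)) =
        (d ^ (1 + q ^ 3) * v + d ^ (q ^ 2 + q) * v ^ (q ^ 2)) ^ (1 + q) ∧
    Tr4 q (c ^ (1 + q) * v ^ (2 * q)) =
        ((d ^ (1 + q ^ 3) * v + d ^ (q ^ 2 + q) * v ^ (q ^ 2)) +
          (d ^ (1 + q ^ 3) * v + d ^ (q ^ 2 + q) * v ^ (q ^ 2)) ^ q) ^ 2 := by
  haveI : Fact (Nat.Prime 2) := ⟨Nat.prime_two⟩
  have hcard' : Fintype.card K = 2 ^ (n * 4) := by rw [hcard, hq, ← pow_mul]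
  have hchar2 : CharP K 2 := by
    have h0 : ((2 ^ (n * 4) : ℕ) : K) = 0 := by
      rw [← hcard']; exact FiniteField.cast_card_eq_zero K
    have hdvd : ringChar K ∣ 2 ^ (n * 4) := by
      rw [← CharP.cast_eq_zero_iff K (ringChar K)]
      exact_mod_cast h0
    have hp : (ringChar K).Prime := CharP.char_is_prime K (ringChar K)
    have h2 : ringChar K = 2 :=
      (Nat.prime_dvd_prime_iff_eq hp Nat.prime_two).mp (hp.dvd_of_dvd_pow hdvd)
    rw [← h2]; exact ringChar.charP K
  haveI := hchar2
  have h2 : (2 : K) = 0 := by exact_mod_cast (CharP.cast_eq_zero K 2)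
  have hfq : ∀ x y : K, (x + y) ^ q = x ^ q + y ^ q := by
    intro x y; rw [hq]; exact add_pow_char_pow x y 2 n
  have hq2e : q ^ 2 = q * q := by ring
  have hq3e : q ^ 3 = q * q * q := by ring
  have hx4 : ∀ x : K, (((x ^ q) ^ q) ^ q) ^ q = x := by
    intro x
    rw [← pow_mul, ← pow_mul, ← pow_mul, show q * (q * (q * q)) = q ^ 4 from by ring,
      ← hcard]
    exact FiniteField.pow_card x
  have hA : d * ((d ^ q) ^ q) = 1 := by
    have := hd1
    rwa [pow_add, pow_one, hq2e, pow_mul] at this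
  have hB : d ^ q * (((d ^ q) ^ q) ^ q) = 1 := by
    calc d ^ q * (((d ^ q) ^ q) ^ q) = (d * ((d ^ q) ^ q)) ^ q := by rw [mul_pow]
    _ = 1 := by rw [hA, one_pow]
  refine ⟨?_, ?_, ?_⟩
  · simp only [hq2e, hq3e, pow_add, pow_mul, pow_one, mul_pow, hfq, hx4]
    ring
  · simp only [Tr4, ← hd, hq2e, hq3e, pow_add, pow_mul, pow_one, pow_two,
      mul_pow, hfq, hx4]
    linear_combination (-(d ^ 2 * v * v ^ q + ((d ^ q) ^ q) ^ 2 * (v ^ q) ^ q *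
        ((v ^ q) ^ q) ^ q)) * hB +
      (-((((d ^ q) ^ q) ^ q) ^ 2 * v * ((v ^ q) ^ q) ^ q +
        (d ^ q) ^ 2 * v ^ q * (v ^ q) ^ q)) * hA
  · simp only [Tr4, ← hd, hq2e, hq3e, pow_add, pow_mul, pow_one, pow_two,
      mul_pow, hfq, hx4]
    linear_combination (-((d * ((d ^ q) ^ q) ^ q * v) * (d ^ q * (d ^ q) ^ q * (v ^ q) ^ q) +
        (d * d ^ q * v ^ q) * ((d ^ q) ^ q * ((d ^ q) ^ q) ^ q * ((v ^ q) ^ q) ^ q) +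
        (d * ((d ^ q) ^ q) ^ q * v + d ^ q * (d ^ q) ^ q * (v ^ q) ^ q) *
          (d * d ^ q * v ^ q + (d ^ q) ^ q * ((d ^ q) ^ q) ^ q * ((v ^ q) ^ q) ^ q))) * h2
end

section
/- Let q = 2^n, c ∈ F_{q^4} with c^{q^2+1}=1, c ≠ 1, and b ∈ F_{q^4}; set v = b^q + b^{q^2} and write Tr for the relative trace from F_{q^4} to F_q. Then Tr(c^{1+q} v^{2q}) = 0 if and only if Tr(c(v + v^q)) + Tr(c^{q+1} v^q) = 0. -/
private lemma aux13 {K : Type*} [Field K] (htwo : (2:K) = 0)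
    (c0 c1 c2 c3 b0 b1 b2 b3 : K) (h02 : c0 * c2 = 1) (h13 : c1 * c3 = 1) :
    ((1+c0)*(1+c1))^2 *
      ( c0*c1*(b2+b3)^2 + c1*c2*(b3+b0)^2 + c2*c3*(b0+b1)^2 + c3*c0*(b1+b2)^2 )
    = (c0*c1) *
      ( (c0*((b1+b2)+(b2+b3)) + c1*((b2+b3)+(b3+b0)) + c2*((b3+b0)+(b0+b1))
          + c3*((b0+b1)+(b1+b2)))
        + (c0*c1*(b2+b3) + c1*c2*(b3+b0) + c2*c3*(b0+b1) + c3*c0*(b1+b2)) )^2 := by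
  linear_combination
    ((2:K)*c3*b1^2 + (4:K)*c3*b0*b1 + (2:K)*c3*b0^2 + (2:K)*c1*b3^2 + (4:K)*c1*b0*b3 + (2:K)*c1*b0^2 + ((-2:K))*c1*c3*b2*b3 + ((-4:K))*c1*c3*b1*b3 + ((-2:K))*c1*c3*b1*b2 + ((-2:K))*c1*c3*b0*b3 + ((-4:K))*c1*c3*b0*b2 + ((-2:K))*c1*c3*b0*b1 + ((-2:K))*c1*c3^2*b1*b2 + ((-4:K))*c1*c3^2*b1^2 + ((-2:K))*c1*c3^2*b0*b2 + ((-6:K))*c1*c3^2*b0*b1 + ((-2:K))*c1*c3^2*b0^2 + ((-1:K))*c1*c2*b3^2 + ((-2:K))*c1*c2*b1*b3 + ((-1:K))*c1*c2*b1^2 + ((-4:K))*c1*c2*b0*b3 + ((-4:K))*c1*c2*b0*b1 + ((-4:K))*c1*c2*b0^2 + ((-2:K))*c1*c2*c3*b1*b3 + ((-2:K))*c1*c2*c3*b1^2 + ((-2:K))*c1*c2*c3*b0*b3 + ((-6:K))*c1*c2*c3*b0*b1 + ((-4:K))*c1*c2*c3*b0^2 + ((-1:K))*c1*c2*c3^2*b1^2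 + ((-2:K))*c1*c2*c3^2*b0*b1 + ((-1:K))*c1*c2*c3^2*b0^2 + ((-2:K))*c1^2*b2*b3 + ((-4:K))*c1^2*b1*b3 + ((-2:K))*c1^2*b1*b2 + ((-2:K))*c1^2*b0*b3 + ((-4:K))*c1^2*b0*b2 + ((-2:K))*c1^2*b0*b1 + ((-2:K))*c1^2*c3*b2*b3 + ((-8:K))*c1^2*c3*b1*b3 + ((-2:K))*c1^2*c3*b1*b2 + (2:K)*c1^2*c3*b1^2 + ((-6:K))*c1^2*c3*b0*b3 + ((-4:K))*c1^2*c3*b0*b2 + ((-2:K))*c1^2*c3*b0*b1 + ((-2:K))*c1^2*c3*b0^2 + ((-2:K))*c1^2*c2*b3^2 + ((-2:K))*c1^2*c2*b1*b3 + ((-6:K))*c1^2*c2*b0*b3 + ((-2:K))*c1^2*c2*b0*b1 + ((-4:K))*c1^2*c2*b0^2 + ((-2:K))*c1^2*c2*c3*b1*b3 + ((-2:K))*c1^2*c2*c3*b0*b3 + ((-2:K))*c1^2*c2*c3*b0*b1 + ((-2:K))*c1^2*c2*c3*b0^2 + ((-2:K))*c1^3*b3^2 + ((-2:K))*c1^3*b2*b3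 + ((-2:K))*c1^3*b0*b3 + ((-2:K))*c1^3*b0*b2 + ((-1:K))*c1^3*c2*b3^2 + ((-2:K))*c1^3*c2*b0*b3 + ((-1:K))*c1^3*c2*b0^2 + c0*c3*b1^2 + (2:K)*c0*c3*b0*b1 + c0*c3*b0^2 + ((-1:K))*c0*c1*b3^2 + ((-4:K))*c0*c1*b2*b3 + ((-4:K))*c0*c1*b1*b3 + ((-4:K))*c0*c1*b1*b2 + ((-2:K))*c0*c1*b1^2 + ((-2:K))*c0*c1*b0*b3 + ((-8:K))*c0*c1*b0*b2 + ((-4:K))*c0*c1*b0*b1 + c0*c1*b0^2 + ((-2:K))*c0*c1*c3*b2*b3 + ((-4:K))*c0*c1*c3*b1*b3 + ((-6:K))*c0*c1*c3*b1*b2 + ((-2:K))*c0*c1*c3*b1^2 + ((-2:K))*c0*c1*c3*b0*b3 + ((-8:K))*c0*c1*c3*b0*b2 + ((-2:K))*c0*c1*c3*b0*b1 + (2:K)*c0*c1*c3*b0^2 + ((-2:K))*c0*c1*c3^2*b1*b2 + ((-2:K))*c0*c1*c3^2*b1^2 + ((-2:K))*c0*c1*c3^2*b0*b2 + ((-2:K))*c0*c1*c3^2*b0*b1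 + ((-2:K))*c0*c1^2*b3^2 + ((-6:K))*c0*c1^2*b2*b3 + ((-4:K))*c0*c1^2*b1*b3 + ((-2:K))*c0*c1^2*b1*b2 + ((-2:K))*c0*c1^2*b0*b3 + ((-8:K))*c0*c1^2*b0*b2 + ((-2:K))*c0*c1^2*b0*b1 + (2:K)*c0*c1^2*b0^2 + ((-2:K))*c0*c1^2*c3*b2*b3 + ((-4:K))*c0*c1^2*c3*b1*b3 + ((-2:K))*c0*c1^2*c3*b1*b2 + c0*c1^2*c3*b1^2 + ((-2:K))*c0*c1^2*c3*b0*b3 + ((-4:K))*c0*c1^2*c3*b0*b2 + c0*c1^2*c3*b0^2 + ((-1:K))*c0*c1^3*b3^2 + ((-2:K))*c0*c1^3*b2*b3 + ((-2:K))*c0*c1^3*b0*b2 + c0*c1^3*b0^2) * h02 +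
    (((-2:K))*b2*b3 + ((-4:K))*b1*b3 + ((-2:K))*b1*b2 + ((-2:K))*b0*b3 + ((-4:K))*b0*b2 + ((-2:K))*b0*b1 + ((-2:K))*c3*b1*b2 + ((-4:K))*c3*b1^2 + ((-2:K))*c3*b0*b2 + ((-6:K))*c3*b0*b1 + ((-2:K))*c3*b0^2 + ((-2:K))*c2*b1*b3 + ((-2:K))*c2*b0*b3 + ((-2:K))*c2*b0*b1 + ((-2:K))*c2*b0^2 + ((-1:K))*c2*c3*b1^2 + ((-2:K))*c2*c3*b0*b1 + ((-1:K))*c2*c3*b0^2 + ((-2:K))*c1*b2*b3 + ((-8:K))*c1*b1*b3 + ((-2:K))*c1*b1*b2 + (2:K)*c1*b1^2 + ((-6:K))*c1*b0*b3 + ((-4:K))*c1*b0*b2 + ((-2:K))*c1*b0*b1 + ((-2:K))*c1*b0^2 + ((-2:K))*c1*c2*b1*b3 + c1*c2*b1^2 + ((-2:K))*c1*c2*b0*b3 + ((-1:K))*c1*c2*b0^2 + ((-2:K))*c0*b2*b3 + (2:K)*c0*b2^2 + ((-4:K))*c0*b1*b3 + ((-2:K))*c0*b1*b2 + ((-2:K))*c0*b0*b3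 + ((-8:K))*c0*b0*b2 + ((-2:K))*c0*b0*b1 + (2:K)*c0*b0^2 + ((-1:K))*c0*c3*b2^2 + ((-6:K))*c0*c3*b1*b2 + ((-6:K))*c0*c3*b1^2 + ((-4:K))*c0*c3*b0*b2 + ((-6:K))*c0*c3*b0*b1 + ((-1:K))*c0*c3*b0^2 + ((-6:K))*c0*c1*b2*b3 + ((-1:K))*c0*c1*b2^2 + ((-12:K))*c0*c1*b1*b3 + ((-4:K))*c0*c1*b1*b2 + (2:K)*c0*c1*b1^2 + ((-6:K))*c0*c1*b0*b3 + ((-8:K))*c0*c1*b0*b2 + ((-4:K))*c0*c1*b0*b1 + ((-1:K))*c0*c1*b0^2 + ((-2:K))*c0^2*b2*b3 + ((-4:K))*c0^2*b1*b3 + ((-2:K))*c0^2*b1*b2 + ((-2:K))*c0^2*b0*b3 + ((-4:K))*c0^2*b0*b2 + ((-2:K))*c0^2*b0*b1 + ((-2:K))*c0^2*c3*b2^2 + ((-6:K))*c0^2*c3*b1*b2 + ((-4:K))*c0^2*c3*b1^2 + ((-2:K))*c0^2*c3*b0*b2 + ((-2:K))*c0^2*c3*b0*b1 + ((-6:K))*c0^2*c1*b2*b3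 + ((-2:K))*c0^2*c1*b2^2 + ((-8:K))*c0^2*c1*b1*b3 + ((-2:K))*c0^2*c1*b1*b2 + (2:K)*c0^2*c1*b1^2 + ((-2:K))*c0^2*c1*b0*b3 + ((-4:K))*c0^2*c1*b0*b2 + ((-2:K))*c0^2*c1*b0*b1 + ((-2:K))*c0^3*b2*b3 + ((-2:K))*c0^3*b2^2 + ((-2:K))*c0^3*b1*b3 + ((-2:K))*c0^3*b1*b2 + ((-1:K))*c0^3*c3*b2^2 + ((-2:K))*c0^3*c3*b1*b2 + ((-1:K))*c0^3*c3*b1^2 + ((-2:K))*c0^3*c1*b2*b3 + ((-1:K))*c0^3*c1*b2^2 + ((-2:K))*c0^3*c1*b1*b3 + c0^3*c1*b1^2) * h13 +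
    (((-1:K))*b2*b3 + ((-2:K))*b1*b3 + ((-1:K))*b1*b2 + ((-1:K))*b0*b3 + ((-2:K))*b0*b2 + ((-1:K))*b0*b1 + ((-1:K))*c3*b1*b2 + ((-1:K))*c3*b1^2 + ((-1:K))*c3*b0*b2 + ((-1:K))*c3*b0*b1 + ((-1:K))*c2*b1*b3 + ((-1:K))*c2*b0*b3 + ((-1:K))*c2*b0*b1 + ((-1:K))*c2*b0^2 + c1*b3^2 + ((-1:K))*c1*b2*b3 + ((-4:K))*c1*b1*b3 + ((-1:K))*c1*b1*b2 + c1*b1^2 + ((-1:K))*c1*b0*b3 + ((-2:K))*c1*b0*b2 + ((-1:K))*c1*b0*b1 + ((-2:K))*c1*c2*b1*b3 + ((-2:K))*c1*c2*b0*b3 + ((-2:K))*c1*c2*b0*b1 + ((-2:K))*c1*c2*b0^2 + ((-1:K))*c1^2*b2*b3 + ((-2:K))*c1^2*b1*b3 + ((-1:K))*c1^2*b1*b2 + ((-1:K))*c1^2*b0*b3 + ((-2:K))*c1^2*b0*b2 + ((-1:K))*c1^2*b0*b1 + ((-1:K))*c1^2*c2*b1*b3 + ((-1:K))*c1^2*c2*b0*b3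 + ((-1:K))*c1^2*c2*b0*b1 + ((-1:K))*c1^2*c2*b0^2 + ((-1:K))*c1^3*b3^2 + ((-1:K))*c1^3*b2*b3 + ((-1:K))*c1^3*b0*b3 + ((-1:K))*c1^3*b0*b2 + ((-1:K))*c0*b2*b3 + c0*b2^2 + ((-2:K))*c0*b1*b3 + ((-1:K))*c0*b1*b2 + ((-1:K))*c0*b0*b3 + ((-4:K))*c0*b0*b2 + ((-1:K))*c0*b0*b1 + c0*b0^2 + ((-2:K))*c0*c3*b1*b2 + ((-2:K))*c0*c3*b1^2 + ((-2:K))*c0*c3*b0*b2 + ((-2:K))*c0*c3*b0*b1 + ((-4:K))*c0*c1*b2*b3 + ((-8:K))*c0*c1*b1*b3 + ((-4:K))*c0*c1*b1*b2 + ((-4:K))*c0*c1*b0*b3 + ((-8:K))*c0*c1*b0*b2 + ((-4:K))*c0*c1*b0*b1 + ((-1:K))*c0*c1^2*b2*b3 + c0*c1^2*b2^2 + ((-2:K))*c0*c1^2*b1*b3 + ((-1:K))*c0*c1^2*b1*b2 + ((-1:K))*c0*c1^2*b0*b3 + ((-4:K))*c0*c1^2*b0*b2 + ((-1:K))*c0*c1^2*b0*b1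 + c0*c1^2*b0^2 + ((-2:K))*c0*c1^3*b3^2 + ((-2:K))*c0*c1^3*b2*b3 + ((-2:K))*c0*c1^3*b0*b3 + ((-2:K))*c0*c1^3*b0*b2 + ((-1:K))*c0^2*b2*b3 + ((-2:K))*c0^2*b1*b3 + ((-1:K))*c0^2*b1*b2 + ((-1:K))*c0^2*b0*b3 + ((-2:K))*c0^2*b0*b2 + ((-1:K))*c0^2*b0*b1 + ((-1:K))*c0^2*c3*b1*b2 + ((-1:K))*c0^2*c3*b1^2 + ((-1:K))*c0^2*c3*b0*b2 + ((-1:K))*c0^2*c3*b0*b1 + c0^2*c1*b3^2 + ((-1:K))*c0^2*c1*b2*b3 + ((-4:K))*c0^2*c1*b1*b3 + ((-1:K))*c0^2*c1*b1*b2 + c0^2*c1*b1^2 + ((-1:K))*c0^2*c1*b0*b3 + ((-2:K))*c0^2*c1*b0*b2 + ((-1:K))*c0^2*c1*b0*b1 + ((-1:K))*c0^2*c1^2*b2*b3 + ((-2:K))*c0^2*c1^2*b1*b3 + ((-1:K))*c0^2*c1^2*b1*b2 + ((-1:K))*c0^2*c1^2*b0*b3 + ((-2:K))*c0^2*c1^2*b0*b2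 + ((-1:K))*c0^2*c1^2*b0*b1 + ((-1:K))*c0^2*c1^3*b3^2 + ((-1:K))*c0^2*c1^3*b2*b3 + ((-1:K))*c0^2*c1^3*b0*b3 + ((-1:K))*c0^2*c1^3*b0*b2 + ((-1:K))*c0^3*b2*b3 + ((-1:K))*c0^3*b2^2 + ((-1:K))*c0^3*b1*b3 + ((-1:K))*c0^3*b1*b2 + ((-2:K))*c0^3*c1*b2*b3 + ((-2:K))*c0^3*c1*b2^2 + ((-2:K))*c0^3*c1*b1*b3 + ((-2:K))*c0^3*c1*b1*b2 + ((-1:K))*c0^3*c1^2*b2*b3 + ((-1:K))*c0^3*c1^2*b2^2 + ((-1:K))*c0^3*c1^2*b1*b3 + ((-1:K))*c0^3*c1^2*b1*b2) * htwo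

theorem stmt_13 (n : ℕ) (hn : 0 < n) (q : ℕ) (hq : q = 2 ^ n)
    (K : Type*) [Field K] [Fintype K] (hcard : Fintype.card K = q ^ 4)
    (c : K) (hc : c ^ (q ^ 2 + 1) = 1) (hc1 : c ≠ 1) (b : K) :
    Tr4 q (c ^ (1 + q) * (b ^ q + b ^ (q ^ 2)) ^ (2 * q)) = 0 ↔
      Tr4 q (c * ((b ^ q + b ^ (q ^ 2)) + (b ^ q + b ^ (q ^ 2)) ^ q)) +
        Tr4 q (c ^ (q + 1) * (b ^ q + b ^ (q ^ 2)) ^ q) = 0 := by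
  -- characteristic 2
  haveI := ringChar.charP K
  obtain ⟨m, hp, hm⟩ := FiniteField.card K (ringChar K)
  have hpow : ringChar K ^ (m:ℕ) = 2 ^ (n*4) := by
    rw [← hm, hcard, hq, ← pow_mul]
  have hdvd2 : ringChar K ∣ 2 :=
    hp.dvd_of_dvd_pow (hpow ▸ dvd_pow_self (ringChar K) m.pos.ne')
  have hr2 : ringChar K = 2 := (Nat.prime_dvd_prime_iff_eq hp Nat.prime_two).mp hdvd2
  haveI : Fact (Nat.Prime 2) := ⟨Nat.prime_two⟩
  haveI hK2 : CharP K 2 := hr2 ▸ ringChar.charP K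
  have h2K : (2:K) = 0 := by exact_mod_cast CharP.cast_eq_zero K 2
  -- Frobenius facts
  have hfa : ∀ x y : K, (x+y)^q = x^q + y^q := fun x y => by
    rw [hq]; exact add_pow_char_pow x y 2 n
  have hpow4 : ∀ x : K, (((x^q)^q)^q)^q = x := fun x => by
    have h : (((x^q)^q)^q)^q = x ^ (q^4) := by
      rw [← pow_mul, ← pow_mul, ← pow_mul]; ring
    rw [h, ← hcard]; exact FiniteField.pow_card x
  have hq2 : ∀ x : K, x ^ (q^2) = (x^q)^q := fun x => by
    rw [pow_two, pow_mul]
  have hq3 : ∀ x : K, x ^ (q^3) = ((x^q)^q)^q := fun x => by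
    rw [show q^3 = q*q*q by ring, pow_mul, pow_mul]
  have hq1p : ∀ x : K, x ^ (1+q) = x * x^q := fun x => by rw [pow_add, pow_one]
  have hqp1 : ∀ x : K, x ^ (q+1) = x^q * x := fun x => by rw [pow_add, pow_one]
  have h2q : ∀ x : K, x ^ (2*q) = (x^q)^2 := fun x => by
    rw [mul_comm, pow_mul]
  have hsq : ∀ x : K, (x^2)^q = (x^q)^2 := fun x => pow_right_comm x 2 q
  -- relations on c
  have h02 : c * ((c^q)^q) = 1 := by
    have h := hc
    rw [pow_add, pow_one, hq2] at h
    rw [mul_comm]; exact h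
  have h13 : c^q * (((c^q)^q)^q) = 1 := by
    have h := congrArg (fun x : K => x ^ q) h02
    simpa [mul_pow] using h
  -- nonvanishing
  have hc0 : c ≠ 0 := by
    intro h; rw [h, zero_pow (by positivity)] at hc; exact zero_ne_one hc
  have hcq0 : c^q ≠ 0 := pow_ne_zero _ hc0
  have h1c : (1 + c) ≠ 0 := by
    intro h; apply hc1; linear_combination h - h2K
  have h1cq : (1 + c^q) ≠ 0 := by
    have : (1 + c^q) = (1+c)^q := by rw [hfa, one_pow]
    rw [this]; exact pow_ne_zero _ h1c
  -- the key algebraic identity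
  have key := aux13 h2K c (c^q) ((c^q)^q) (((c^q)^q)^q) b (b^q) ((b^q)^q) (((b^q)^q)^q)
    h02 h13
  have eA : Tr4 q (c ^ (1 + q) * (b ^ q + b ^ (q ^ 2)) ^ (2 * q)) =
      c*(c^q)*(((b^q)^q)+(((b^q)^q)^q))^2 + (c^q)*((c^q)^q)*((((b^q)^q)^q)+b)^2
        + ((c^q)^q)*(((c^q)^q)^q)*(b+(b^q))^2 + (((c^q)^q)^q)*c*((b^q)+((b^q)^q))^2 := by
    simp only [Tr4, hq2, hq3, hq1p, h2q, mul_pow, hfa, hsq, hpow4]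
    try ring
  have eB : Tr4 q (c * ((b ^ q + b ^ (q ^ 2)) + (b ^ q + b ^ (q ^ 2)) ^ q)) +
        Tr4 q (c ^ (q + 1) * (b ^ q + b ^ (q ^ 2)) ^ q) =
      (c*(((b^q)+((b^q)^q))+(((b^q)^q)+(((b^q)^q)^q)))
        + (c^q)*((((b^q)^q)+(((b^q)^q)^q))+((((b^q)^q)^q)+b))
        + ((c^q)^q)*(((((b^q)^q)^q)+b)+(b+(b^q)))
        + (((c^q)^q)^q)*((b+(b^q))+((b^q)+((b^q)^q))))
      + (c*(c^q)*(((b^q)^q)+(((b^q)^q)^q)) + (c^q)*((c^q)^q)*((((b^q)^q)^q)+b)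
        + ((c^q)^q)*(((c^q)^q)^q)*(b+(b^q)) + (((c^q)^q)^q)*c*((b^q)+((b^q)^q))) := by
    simp only [Tr4, hq2, hq3, hqp1, mul_pow, hfa, hsq, hpow4]
    try ring
  rw [eA, eB]
  set A := c*(c^q)*(((b^q)^q)+(((b^q)^q)^q))^2 + (c^q)*((c^q)^q)*((((b^q)^q)^q)+b)^2
        + ((c^q)^q)*(((c^q)^q)^q)*(b+(b^q))^2 + (((c^q)^q)^q)*c*((b^q)+((b^q)^q))^2 with hA
  set B := (c*(((b^q)+((b^q)^q))+(((b^q)^q)+(((b^q)^q)^q)))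
        + (c^q)*((((b^q)^q)+(((b^q)^q)^q))+((((b^q)^q)^q)+b))
        + ((c^q)^q)*(((((b^q)^q)^q)+b)+(b+(b^q)))
        + (((c^q)^q)^q)*((b+(b^q))+((b^q)+((b^q)^q))))
      + (c*(c^q)*(((b^q)^q)+(((b^q)^q)^q)) + (c^q)*((c^q)^q)*((((b^q)^q)^q)+b)
        + ((c^q)^q)*(((c^q)^q)^q)*(b+(b^q)) + (((c^q)^q)^q)*c*((b^q)+((b^q)^q))) with hB
  constructor
  · intro h
    rw [h, mul_zero] at key
    have h2 : B ^ 2 = 0 := by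
      rcases mul_eq_zero.mp key.symm with h' | h'
      · exact absurd h' (mul_ne_zero hc0 hcq0)
      · exact h'
    exact pow_eq_zero_iff (two_ne_zero) |>.mp h2
  · intro h
    rw [h] at key
    have k' : ((1+c)*(1+c^q))^2 * A = 0 := by rw [key]; ring
    have hne : ((1+c)*(1+c^q))^2 ≠ 0 := pow_ne_zero _ (mul_ne_zero h1c h1cq)
    exact (mul_eq_zero.mp k').resolve_left hne
end

section
/- Let q = 2^n, c ∈ F_{q^4} with c^{q^2+1}=1, c ≠ 1, and b ∈ F_{q^4} with v = b^q + b^{q^2}. Assume Tr(c^{1+q} v^{2q}) = 0, where Tr is the relative trace from F_{q^4} to F_q. Then Tr(c^{q+1} v^q)^2 = Tr(c^{q+1}) · Tr(c v^{q+1}). -/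
private lemma core_stmt14 {K : Type*} [Field K] (h2 : (2:K) = 0)
    (v0 v1 v2 v3 e0 e1 e2 e3 c0 c1 c2 c3 : K)
    (hr0 : e0*e2 = 1) (hr1 : e1*e3 = 1)
    (hc0 : c0 = e0*e3) (hc1 : c1 = e0*e1) (hc2 : c2 = e1*e2) (hc3 : c3 = e2*e3)
    (hv0 : v0 = v1 + v2 + v3)
    (hS : e0*v1 + e1*v2 + e2*v3 + e3*v0 = 0) :
    (c0*c1*v1 + c1*c2*v2 + c2*c3*v3 + c3*c0*v0)^2 =
      (c0*c1 + c1*c2 + c2*c3 + c3*c0) *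
        (c0*v0*v1 + c1*v1*v2 + c2*v2*v3 + c3*v3*v0) := by
  subst hc0 hc1 hc2 hc3 hv0
  linear_combination (v1*e0^3 + v1*e1 + v1*e2 + v1*e3^3 + 2*v2*e0^3 + v2*e1^3 + v2*e1 + 2*v2*e2 + v2*e3^3 + v2*e3 + 2*v3*e0^3 + v3*e0 + v3*e1 + v3*e2^3 + 2*v3*e2 + v3*e3^3) * hS + (2*v1^2*e0^2*e1*e3^3 - v1^2*e0*e1^2*e3 + v1^2*e0*e2*e3^4 - v1^2*e0*e3^3 - v1^2*e1*e2*e3^2 + v1^2*e3^4 - v1^2 + 2*v1*v2*e0^2*e1^3*e3 + 2*v1*v2*e0^2*e1*e3^3 - v1*v2*e0*e1^3 + 2*v1*v2*e0*e1^2*e2*e3^2 - v1*v2*e0*e1^2*e3 - v1*v2*e0*e1*e3^2 + 2*v1*v2*e0*e2*e3^4 - v1*v2*e0*e3^3 - v1*v2*e1^2*e2*e3 + 2*v1*v2*e1^2*e3^2 - v1*v2*e1*e2*e3^2 + 2*v1*v2*e3^4 - 2*v1*v2 + 2*v1*v3*e0^2*e1*e3^3 - v1*v3*e0^2 + 2*v1*v3*e0*e1^2*e2*e3^2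 - v1*v3*e0*e1^2*e3 - v1*v3*e0*e1*e3^2 + 2*v1*v3*e0*e2*e3^4 - v1*v3*e0*e3^3 - v1*v3*e1^2*e2*e3 + 2*v1*v3*e1^2*e3^2 + 2*v1*v3*e1*e2^2*e3^3 - v1*v3*e1*e2*e3^2 - v1*v3*e2^2 - v1*v3*e2*e3^3 + 2*v1*v3*e3^4 - 2*v1*v3 + v2^2*e0*e1^4*e2 + 2*v2^2*e0*e1^2*e2*e3^2 + v2^2*e0*e2*e3^4 + v2^2*e1^4 + 2*v2^2*e1^2*e3^2 + v2^2*e3^4 - 2*v2*v3*e0^2 + 2*v2*v3*e0*e1^2*e2*e3^2 - v2*v3*e0*e1^2*e3 - v2*v3*e0*e1*e3^2 + 2*v2*v3*e0*e2*e3^4 + 2*v2*v3*e1^3*e2^2*e3 - v2*v3*e1^3*e2 - v2*v3*e1^2*e2*e3 + 2*v2*v3*e1^2*e3^2 + 2*v2*v3*e1*e2^2*e3^3 - v2*v3*e1*e2*e3^2 - v2*v3*e2*e3^3 + 2*v2*v3*e3^4 - 2*v3^2*e0^2 - v3^2*e0*e1*e3^2 + v3^2*e0*e2*e3^4 - v3^2*e1^2*e2*e3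 + 2*v3^2*e1*e2^2*e3^3 - v3^2*e2*e3^3 + v3^2*e3^4 - v3^2) * hr0 + (v1^2*e0^4*e1*e3 + v1^2*e0^4 - v1^2*e0^3*e3 + 2*v1^2*e0^2*e3^2 - v1^2*e0*e1 - v1^2*e2*e3 - v1^2 - v1*v2*e0^3*e1 - v1*v2*e0^3*e3 + 2*v1*v2*e0^2*e1^2 + 2*v1*v2*e0^2*e3^2 - v1*v2*e0*e1 - v1*v2*e0*e3 - v1*v2*e1^2 - v1*v2*e1*e2 + 2*v1*v2*e1*e3 - v1*v2*e2*e3 - v1*v2*e3^2 - v1*v3*e0^3*e3 + 2*v1*v3*e0^2*e3^2 - v1*v3*e0*e1 - v1*v3*e0*e3 - v1*v3*e1*e2 + 2*v1*v3*e1*e3 - v1*v3*e2^3*e3 + 2*v1*v3*e2^2*e3^2 - v1*v3*e2*e3 - v2^2*e1^2 + 2*v2^2*e1*e3 - v2^2*e3^2 - v2*v3*e0*e1 - v2*v3*e0*e3 + 2*v2*v3*e1^2*e2^2 - v2*v3*e1^2 - v2*v3*e1*e2^3 - v2*v3*e1*e2 + 2*v2*v3*e1*e3 - v2*v3*e2^3*e3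 + 2*v2*v3*e2^2*e3^2 - v2*v3*e2*e3 - v2*v3*e3^2 - v3^2*e0*e3 + v3^2*e1*e2^4*e3 - v3^2*e1*e2 + v3^2*e2^4 - v3^2*e2^3*e3 + 2*v3^2*e2^2*e3^2 - v3^2) * hr1 + (- v1^2*e0^3*e3 + v1^2*e0^2*e3^2 - v1^2*e0*e1 - v1^2*e0*e3^3 - v1^2*e2*e3 - v1^2 - v1*v2*e0^4 - v1*v2*e0^3*e1 - 2*v1*v2*e0^3*e3 + v1*v2*e0^2*e1^2 + v1*v2*e0^2*e3^2 - v1*v2*e0*e1^3 - v1*v2*e0*e1 - v1*v2*e0*e3^3 - v1*v2*e0*e3 - v1*v2*e1^2 - v1*v2*e1*e2 - 2*v1*v2*e2*e3 - v1*v2*e3^2 - v1*v2 - v1*v3*e0^4 - 2*v1*v3*e0^3*e3 + v1*v3*e0^2*e3^2 - v1*v3*e0^2 - v1*v3*e0*e1 - v1*v3*e0*e3^3 - v1*v3*e0*e3 - v1*v3*e1*e2 - v1*v3*e2^3*e3 + v1*v3*e2^2*e3^2 - v1*v3*e2^2 - v1*v3*e2*e3^3 - 2*v1*v3*e2*e3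 - v1*v3 - v2^2*e0^3*e1 - v2^2*e0^3*e3 - v2^2*e1^2 - v2^2*e1*e2 - v2^2*e2*e3 - v2^2*e3^2 - v2*v3*e0^3*e1 - 2*v2*v3*e0^3*e3 - v2*v3*e0^2 - v2*v3*e0*e1 - v2*v3*e0*e3 - v2*v3*e1^3*e2 + v2*v3*e1^2*e2^2 - v2*v3*e1^2 - v2*v3*e1*e2^3 - 2*v2*v3*e1*e2 - v2*v3*e2^3*e3 + v2*v3*e2^2*e3^2 - v2*v3*e2^2 - v2*v3*e2*e3^3 - 3*v2*v3*e2*e3 - v2*v3*e3^2 - v3^2*e0^3*e3 - v3^2*e0^2 - v3^2*e0*e3 - v3^2*e1*e2 - v3^2*e2^3*e3 + v3^2*e2^2*e3^2 - v3^2*e2^2 - v3^2*e2*e3^3 - v3^2*e2*e3 - v3^2) * h2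

theorem stmt_14 (n : ℕ) (hn : 0 < n) (q : ℕ) (hq : q = 2 ^ n)
    (K : Type*) [Field K] [Fintype K] (hcard : Fintype.card K = q ^ 4)
    (c : K) (hc : c ^ (q ^ 2 + 1) = 1) (hc1 : c ≠ 1) (b : K)
    (h : Tr4 q (c ^ (1 + q) * (b ^ q + b ^ (q ^ 2)) ^ (2 * q)) = 0) :
    Tr4 q (c ^ (q + 1) * (b ^ q + b ^ (q ^ 2)) ^ q) ^ 2 =
      Tr4 q (c ^ (q + 1)) * Tr4 q (c * (b ^ q + b ^ (q ^ 2)) ^ (q + 1)) := by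
  -- characteristic 2
  have h2 : (2 : K) = 0 := by
    have hc0 := FiniteField.cast_card_eq_zero K
    rw [hcard, hq] at hc0
    push_cast at hc0
    rw [← pow_mul] at hc0
    exact (pow_eq_zero_iff (by omega : n * 4 ≠ 0)).mp hc0
  -- squaring is injective
  have sqinj : ∀ x y : K, x ^ 2 = y ^ 2 → x = y := by
    intro x y hxy
    have hz : (x - y) ^ 2 = 0 := by linear_combination hxy + (y ^ 2 - x * y) * h2
    have := (pow_eq_zero_iff (by norm_num : (2:ℕ) ≠ 0)).mp hz
    exact sub_eq_zero.mp this
  -- Frobenius is additive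
  have frob2 : ∀ x y : K, (x + y) ^ 2 = x ^ 2 + y ^ 2 := by
    intro x y; linear_combination x * y * h2
  have frobpow : ∀ m : ℕ, ∀ x y : K, (x + y) ^ 2 ^ m = x ^ 2 ^ m + y ^ 2 ^ m := by
    intro m
    induction m with
    | zero => intro x y; simp
    | succ k ih =>
      intro x y
      rw [pow_succ, pow_mul, pow_mul, pow_mul, ih, frob2]
  have frobq : ∀ x y : K, (x + y) ^ q = x ^ q + y ^ q := by
    intro x y; rw [hq]; exact frobpow n x y
  -- x^(q^4) = x
  have hq4 : ∀ x : K, x ^ q ^ 4 = x := by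
    intro x; rw [← hcard]; exact FiniteField.pow_card x
  have hpow4 : ∀ x : K, (((x ^ q) ^ q) ^ q) ^ q = x := by
    intro x
    rw [show (((x ^ q) ^ q) ^ q) ^ q = x ^ q ^ 4 by ring]
    exact hq4 x
  have hxq2 : ∀ x : K, x ^ q ^ 2 = (x ^ q) ^ q := by intro x; ring
  have hxq3 : ∀ x : K, x ^ q ^ 3 = ((x ^ q) ^ q) ^ q := by intro x; ring
  have hsqq : ∀ x : K, (x ^ 2) ^ q = (x ^ q) ^ 2 := by intro x; ring
  -- square root of c^(q+1)
  obtain ⟨e, he⟩ : ∃ e : K, e ^ 2 = c ^ (q + 1) := by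
    have : Function.Surjective (fun x : K => x ^ 2) :=
      Finite.injective_iff_surjective.mp (fun x y hxy => sqinj x y hxy)
    obtain ⟨e, he⟩ := this (c ^ (q + 1))
    exact ⟨e, he⟩
  have he' : e ^ 2 = c ^ q * c := by rw [he, pow_succ]
  have he1 : (e ^ q) ^ 2 = (c ^ q) ^ q * c ^ q := by
    rw [pow_right_comm, he', mul_pow]
  have he2 : ((e ^ q) ^ q) ^ 2 = ((c ^ q) ^ q) ^ q * (c ^ q) ^ q := by
    rw [pow_right_comm, he1, mul_pow]
  have he3 : (((e ^ q) ^ q) ^ q) ^ 2 = c * ((c ^ q) ^ q) ^ q := by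
    rw [pow_right_comm, he2, mul_pow, hpow4]
  -- norm relations for c
  have hcc02 : c * (c ^ q) ^ q = 1 := by
    rw [← pow_mul, ← pow_two, mul_comm, ← pow_succ]; exact hc
  have hcc13 : c ^ q * ((c ^ q) ^ q) ^ q = 1 := by
    rw [← mul_pow, hcc02, one_pow]
  -- unit relations for e
  have hr0 : e * (e ^ q) ^ q = 1 := by
    apply sqinj
    rw [mul_pow, he', he2, one_pow]
    linear_combination (c ^ q * ((c ^ q) ^ q) ^ q) * hcc02 + hcc13
  have hr1 : e ^ q * ((e ^ q) ^ q) ^ q = 1 := by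
    apply sqinj
    rw [mul_pow, he1, he3, one_pow]
    linear_combination (c ^ q * ((c ^ q) ^ q) ^ q) * hcc02 + hcc13
  -- expressing c-conjugates via e-conjugates
  have hc0e : c = e * ((e ^ q) ^ q) ^ q := by
    refine (sqinj _ _ ?_).symm
    rw [mul_pow, he', he3]
    linear_combination (c ^ 2) * hcc13
  have hc1e : c ^ q = e * e ^ q := by
    refine (sqinj _ _ ?_).symm
    rw [mul_pow, he', he1]
    linear_combination ((c ^ q) ^ 2) * hcc02
  have hc2e : (c ^ q) ^ q = e ^ q * (e ^ q) ^ q := by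
    refine (sqinj _ _ ?_).symm
    rw [mul_pow, he1, he2]
    linear_combination (((c ^ q) ^ q) ^ 2) * hcc13
  have hc3e : ((c ^ q) ^ q) ^ q = (e ^ q) ^ q * ((e ^ q) ^ q) ^ q := by
    refine (sqinj _ _ ?_).symm
    rw [mul_pow, he2, he3]
    linear_combination ((((c ^ q) ^ q) ^ q) ^ 2) * hcc02
  -- trace-zero decomposition of v
  have hv0sum : b ^ q + (b ^ q) ^ q =
      ((b ^ q) ^ q + ((b ^ q) ^ q) ^ q) + (((b ^ q) ^ q) ^ q + b) + (b + b ^ q) := by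
    linear_combination (-(((b ^ q) ^ q) ^ q) - b) * h2
  -- normalize the trace expressions
  simp only [Tr4, pow_add, pow_one, pow_mul, hxq3, hxq2, hsqq, mul_pow, frobq, hpow4] at h ⊢
  -- the linear relation from the hypothesis
  have hS : e * ((b ^ q) ^ q + ((b ^ q) ^ q) ^ q) + e ^ q * (((b ^ q) ^ q) ^ q + b)
      + (e ^ q) ^ q * (b + b ^ q) + ((e ^ q) ^ q) ^ q * (b ^ q + (b ^ q) ^ q) = 0 := by
    apply sqinj _ 0
    rw [show (0:K) ^ 2 = 0 by ring]
    linear_combination h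
      + ((b ^ q) ^ q + ((b ^ q) ^ q) ^ q) ^ 2 * he'
      + (((b ^ q) ^ q) ^ q + b) ^ 2 * he1
      + (b + b ^ q) ^ 2 * he2
      + (b ^ q + (b ^ q) ^ q) ^ 2 * he3
      + (e * ((b ^ q) ^ q + ((b ^ q) ^ q) ^ q) * (e ^ q) * (((b ^ q) ^ q) ^ q + b)
        + e * ((b ^ q) ^ q + ((b ^ q) ^ q) ^ q) * ((e ^ q) ^ q) * (b + b ^ q)
        + e * ((b ^ q) ^ q + ((b ^ q) ^ q) ^ q) * (((e ^ q) ^ q) ^ q) * (b ^ q + (b ^ q) ^ q)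
        + (e ^ q) * (((b ^ q) ^ q) ^ q + b) * ((e ^ q) ^ q) * (b + b ^ q)
        + (e ^ q) * (((b ^ q) ^ q) ^ q + b) * (((e ^ q) ^ q) ^ q) * (b ^ q + (b ^ q) ^ q)
        + ((e ^ q) ^ q) * (b + b ^ q) * (((e ^ q) ^ q) ^ q) * (b ^ q + (b ^ q) ^ q)) * h2
  linear_combination core_stmt14 h2
    (b ^ q + (b ^ q) ^ q)
    ((b ^ q) ^ q + ((b ^ q) ^ q) ^ q)
    (((b ^ q) ^ q) ^ q + b)
    (b + b ^ q)
    e (e ^ q) ((e ^ q) ^ q) (((e ^ q) ^ q) ^ q)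
    c (c ^ q) ((c ^ q) ^ q) (((c ^ q) ^ q) ^ q)
    hr0 hr1 hc0e hc1e hc2e hc3e hv0sum hS
end

section
/- Let q = 2^n and c ∈ F_{q^4} with c^{q^2+1}=1, c ≠ 1. The two elements c + c^{-1} and c^q + c^{-q} are distinct, lie in F_{q^2} \ F_q, and are exactly the two roots of u^2 + Tr(c) u + Tr(c^{1+q}) = 0, where Tr is the relative trace from F_{q^4} to F_q. -/
theorem stmt_15 (n : ℕ) (hn : 0 < n) (q : ℕ) (hq : q = 2 ^ n)
    (K : Type*) [Field K] [Fintype K] (hcard : Fintype.card K = q ^ 4)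
    (c : K) (hc : c ^ (q ^ 2 + 1) = 1) (hc1 : c ≠ 1) :
    c + c⁻¹ ≠ c ^ q + (c⁻¹) ^ q ∧
    ((c + c⁻¹) ^ (q ^ 2) = c + c⁻¹ ∧ (c + c⁻¹) ^ q ≠ c + c⁻¹) ∧
    ((c ^ q + (c⁻¹) ^ q) ^ (q ^ 2) = c ^ q + (c⁻¹) ^ q ∧
      (c ^ q + (c⁻¹) ^ q) ^ q ≠ c ^ q + (c⁻¹) ^ q) ∧
    (∀ u : K, u ^ 2 + Tr4 q c * u + Tr4 q (c ^ (1 + q)) = 0 ↔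
      u = c + c⁻¹ ∨ u = c ^ q + (c⁻¹) ^ q) := by
  haveI : Fact (Nat.Prime 2) := ⟨by norm_num⟩
  -- characteristic 2
  have two0 : (2 : K) = 0 := by
    have h1 : ((Fintype.card K : ℕ) : K) = 0 := FiniteField.cast_card_eq_zero K
    rw [hcard, hq] at h1
    push_cast at h1
    have h2 : ((2 : K)) ^ (n * 4) = 0 := by
      rw [← pow_mul] at h1; exact h1
    exact pow_eq_zero_iff (Nat.mul_ne_zero hn.ne' (by norm_num)) |>.mp h2
  haveI : CharP K 2 := by
    have := CharP.ringChar_of_prime_eq_zero (by norm_num : Nat.Prime 2) two0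
    rw [← this]; exact ringChar.charP K
  have frob : ∀ x y : K, (x + y) ^ q = x ^ q + y ^ q := by
    intro x y; rw [hq]; exact add_pow_char_pow x y 2 n
  have hc0 : c ≠ 0 := by
    intro h; rw [h] at hc; simp at hc
  have hcinv : c ^ (q ^ 2) = c⁻¹ := by
    have h1 : c ^ (q ^ 2) * c = 1 := by rw [← pow_succ]; exact hc
    exact eq_inv_of_mul_eq_one_left h1
  have powq2 : ∀ x : K, x ^ (q ^ 2) = (x ^ q) ^ q := by
    intro x; rw [pow_two, pow_mul]
  have hinvq2 : (c⁻¹) ^ (q ^ 2) = c := by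
    rw [inv_pow, hcinv, inv_inv]
  -- b^q = a
  have hbq : (c ^ q + (c⁻¹) ^ q) ^ q = c + c⁻¹ := by
    rw [frob, ← powq2, ← powq2, hcinv, hinvq2, add_comm]
  -- a^q = b
  have haq : (c + c⁻¹) ^ q = c ^ q + (c⁻¹) ^ q := frob c c⁻¹
  -- a ≠ b
  have hne : c + c⁻¹ ≠ c ^ q + (c⁻¹) ^ q := by
    intro h
    have key : (c - c ^ q) * (c ^ (1 + q) - 1) = 0 := by
      have hid : (c - c ^ q) * (c ^ (1 + q) - 1)
          = c ^ (1 + q) * ((c + c⁻¹) - (c ^ q + (c⁻¹) ^ q)) := by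
        rw [pow_add, inv_pow]
        field_simp
        ring
      rw [hid, h, sub_self, mul_zero]
    have hcq : c ^ q = c⁻¹ ∨ c ^ q = c := by
      rcases mul_eq_zero.mp key with h1 | h1
      · right; exact (sub_eq_zero.mp h1).symm
      · left
        have h2 : c * c ^ q = 1 := by
          have := sub_eq_zero.mp h1
          rwa [pow_add, pow_one] at this
        exact eq_inv_of_mul_eq_one_left (by rw [mul_comm]; exact h2)
    have hcc : c ^ (q ^ 2) = c := by
      rcases hcq with h1 | h1
      · rw [powq2, h1, inv_pow, h1, inv_inv]
      · rw [powq2, h1, h1]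
    have hsq : c ^ 2 = 1 := by
      rw [hcc] at hcinv
      field_simp at hcinv
      exact hcinv
    have hfac : (c - 1) * (c + 1) = 0 := by linear_combination hsq
    rcases mul_eq_zero.mp hfac with h1 | h1
    · exact hc1 (sub_eq_zero.mp h1)
    · apply hc1
      have h2 : c = -1 := eq_neg_of_add_eq_zero_left h1
      rw [h2, neg_eq_iff_add_eq_zero]
      linear_combination two0
  constructor
  · exact hne
  refine ⟨⟨?_, ?_⟩, ⟨?_, ?_⟩, ?_⟩
  · rw [powq2, haq, hbq]
  · rw [haq]; exact fun h => hne h.symm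
  · rw [powq2, hbq, haq]
  · rw [hbq]; exact hne
  · -- the quadratic
    have hq3 : ∀ x : K, x ^ (q ^ 3) = (x ^ (q ^ 2)) ^ q := by
      intro x; rw [← pow_mul, ← pow_succ]
    have hTra : Tr4 q c = (c + c⁻¹) + (c ^ q + (c⁻¹) ^ q) := by
      unfold Tr4
      rw [hq3, hcinv]
      ring
    have hq4 : (c ^ (q ^ 3)) ^ q = c := by
      rw [← pow_mul, show q ^ 3 * q = q ^ 2 * q ^ 2 by ring, pow_mul, hcinv, hinvq2]
    have hTrab : Tr4 q (c ^ (1 + q)) = (c + c⁻¹) * (c ^ q + (c⁻¹) ^ q) := by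
      unfold Tr4
      have e1 : (c ^ (1 + q)) ^ q = c ^ q * c⁻¹ := by
        rw [pow_add, pow_one, mul_pow, ← pow_mul, ← pow_two, hcinv]
      have e2 : (c ^ (1 + q)) ^ (q ^ 2) = c⁻¹ * (c⁻¹) ^ q := by
        rw [pow_add, pow_one, mul_pow, hcinv, ← pow_mul,
          show q * q ^ 2 = q ^ 2 * q by ring, pow_mul, hcinv]
      have e3 : (c ^ (1 + q)) ^ (q ^ 3) = (c⁻¹) ^ q * c := by
        have h5 : (c ^ q) ^ (q ^ 3) = c := by
          rw [← pow_mul, show q * q ^ 3 = q ^ 3 * q by ring, pow_mul, hq4]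
        rw [pow_add, pow_one, mul_pow, hq3, hcinv, h5]
      rw [e1, e2, e3, pow_add, pow_one]
      ring
    intro u
    rw [hTra, hTrab]
    have key : u ^ 2 + ((c + c⁻¹) + (c ^ q + (c⁻¹) ^ q)) * u
        + (c + c⁻¹) * (c ^ q + (c⁻¹) ^ q)
        = (u - (c + c⁻¹)) * (u - (c ^ q + (c⁻¹) ^ q)) := by
      linear_combination u * ((c + c⁻¹) + (c ^ q + (c⁻¹) ^ q)) * two0
    rw [key, mul_eq_zero, sub_eq_zero, sub_eq_zero]
end

section
/- Let q = 2^n, c ∈ F_{q^4} with c^{q^2+1}=1, c ≠ 1, and b ∈ F_{q^4}, v = b^q + b^{q^2}, Tr the relative trace from F_{q^4} to F_q. Define G(u) = G_0 + G_1 u + G_2 u^2 + G_3 u^3 + G_4 u^4 with G_0 = Tr(c^2(b^{2q}+b^{2q^3})) + Tr(c^{2(1+q)}(b^{2q^2}+b^{2q^3})), G_1 = Tr(c(b^q+b^{q^3})) · Tr(c^{1+q}(b^{q^2}+b^{q^3})), G_2 = Tr(b^2) + Tr(c^2(b^{2q^2}+b^{q+q^2}+b^{q^2+q^3}+b^{q+q^3}))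 + Tr(c^{1+q})(1+b^{1+q+q^2+q^3}) + Tr(c^{1+q}(b^{q+q^2}+b^{1+q^3})), G_3 = Tr(c)(1+b^{1+q+q^2+q^3}) + Tr(b)·Tr(c b^{q^2}), and G_4 = (1+b^{q+q^3})(1+b^{1+q^2}). Then G(u) = (u^2 + Tr(c) u + Tr(c^{1+q})) · ((1+b^{q+q^3})(1+b^{1+q^2}) u^2 + A u + B) as polynomials in u, where A = Tr(c v^{q+1}) and B = Tr(c^{1+q} v^{2q}). -/
theorem stmt_16 (n : ℕ) (hn : 0 < n) (q : ℕ) (hq : q = 2 ^ n)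
    (K : Type*) [Field K] [Fintype K] (hcard : Fintype.card K = q ^ 4)
    (c : K) (hc : c ^ (q ^ 2 + 1) = 1) (hc1 : c ≠ 1) (b : K)
    (v : K) (hv : v = b ^ q + b ^ (q ^ 2))
    (G₀ G₁ G₂ G₃ G₄ A B : K)
    (hG0 : G₀ = Tr4 q (c ^ 2 * (b ^ (2 * q) + b ^ (2 * q ^ 3))) +
        Tr4 q (c ^ (2 * (1 + q)) * (b ^ (2 * q ^ 2) + b ^ (2 * q ^ 3))))
    (hG1 : G₁ = Tr4 q (c * (b ^ q + b ^ (q ^ 3))) *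
        Tr4 q (c ^ (1 + q) * (b ^ (q ^ 2) + b ^ (q ^ 3))))
    (hG2 : G₂ = Tr4 q (b ^ 2) +
        Tr4 q (c ^ 2 * (b ^ (2 * q ^ 2) + b ^ (q + q ^ 2) + b ^ (q ^ 2 + q ^ 3) + b ^ (q + q ^ 3))) +
        Tr4 q (c ^ (1 + q)) * (1 + b ^ (1 + q + q ^ 2 + q ^ 3)) +
        Tr4 q (c ^ (1 + q) * (b ^ (q + q ^ 2) + b ^ (1 + q ^ 3))))
    (hG3 : G₃ = Tr4 q c * (1 + b ^ (1 + q + q ^ 2 + q ^ 3)) + Tr4 q b * Tr4 q (c * b ^ (q ^ 2)))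
    (hG4 : G₄ = (1 + b ^ (q + q ^ 3)) * (1 + b ^ (1 + q ^ 2)))
    (hA : A = Tr4 q (c * v ^ (q + 1)))
    (hB : B = Tr4 q (c ^ (1 + q) * v ^ (2 * q))) :
    ∀ u : K,
      G₀ + G₁ * u + G₂ * u ^ 2 + G₃ * u ^ 3 + G₄ * u ^ 4 =
        (u ^ 2 + Tr4 q c * u + Tr4 q (c ^ (1 + q))) *
          ((1 + b ^ (q + q ^ 3)) * (1 + b ^ (1 + q ^ 2)) * u ^ 2 + A * u + B) := by
  intro u
  -- characteristic 2
  have hp : Nat.Prime (ringChar K) ∧ ∃ m : ℕ+, Fintype.card K = (ringChar K) ^ (m : ℕ) := by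
    obtain ⟨m, hpr, hm⟩ := FiniteField.card K (ringChar K)
    exact ⟨hpr, m, hm⟩
  obtain ⟨hpr, m, hm⟩ := hp
  have hchar : ringChar K = 2 := by
    have hd : ringChar K ∣ 2 := by
      refine Nat.Prime.dvd_of_dvd_pow (n := 4 * n) hpr ?_
      have : (ringChar K) ^ (m : ℕ) = 2 ^ (4 * n) := by
        rw [← hm, hcard, hq, ← pow_mul, mul_comm]
      exact this ▸ dvd_pow_self (ringChar K) m.ne_zero
    exact ((Nat.prime_dvd_prime_iff_eq hpr Nat.prime_two).mp hd)
  haveI : CharP K 2 := hchar ▸ ringChar.charP K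
  have h2 : (2 : K) = 0 := by exact_mod_cast CharP.cast_eq_zero K 2
  -- frobenius facts
  haveI : Fact (Nat.Prime 2) := ⟨Nat.prime_two⟩
  have hadd : ∀ s t : K, (s + t) ^ q = s ^ q + t ^ q := by
    intro s t; rw [hq]; exact add_pow_char_pow s t 2 n
  have he2 : ∀ t : K, t ^ q ^ 2 = (t ^ q) ^ q := by
    intro t; rw [pow_two, pow_mul]
  have he3 : ∀ t : K, t ^ q ^ 3 = ((t ^ q) ^ q) ^ q := by
    intro t; rw [pow_succ, pow_two, pow_mul, pow_mul]
  have hcycle : ∀ t : K, (((t ^ q) ^ q) ^ q) ^ q = t := by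
    intro t
    have h4 : q * (q * (q * q)) = Fintype.card K := by rw [hcard]; ring
    rw [← pow_mul, ← pow_mul, ← pow_mul, h4]
    exact FiniteField.pow_card t
  have hsq : ∀ t : K, (t ^ 2) ^ q = (t ^ q) ^ 2 := fun t => pow_right_comm t 2 q
  have hone : (1 : K) ^ q = 1 := one_pow q
  -- relation c^{q^2} * c = 1
  have hxz : c * (c ^ q) ^ q = 1 := by
    have := hc
    rw [pow_add, pow_one, he2] at this
    linear_combination this
  have hyw : c ^ q * ((c ^ q) ^ q) ^ q = 1 := by
    have h := congrArg (· ^ q) hxz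
    simpa [mul_pow, hone] using h
  subst hG0 hG1 hG2 hG3 hG4 hA hB hv
  simp only [Tr4, pow_add, pow_mul, pow_one, he2, he3, mul_pow, hadd, hsq, hone, hcycle]
  set b1 := b ^ q with hb1
  set b2 := b1 ^ q with hb2
  set b3 := b2 ^ q with hb3
  set y := c ^ q with hy
  set z := y ^ q with hz
  set w := z ^ q with hw
  linear_combination (norm := ring1) ((0:K) - b3^2 - b3^2*z*u - b3^2*y*z*u^2 - b3^2*y^2 - b3^2*y^2*z*u - b3^2*c*u - b3^2*c*y*u^2 - b3^2*c*y^2*u - b2*b3 - b2*b3*u^2 - b2*b3*y*u - b2*b3*y^2 - b2*b3*c*u - 2*b2*b3*c*y*u^2 - b2*b3*c*y^2*u - b2*b3*c^2 - b2*b3*c^2*y*u - b2*b3*c^2*y^2 - b2^2 - b2^2*w*u - b2^2*y*u - b2^2*c*w*u^2 - b2^2*c*y*u^2 - b2^2*c^2 - b2^2*c^2*w*u - b2^2*c^2*y*u - b1*b3*u^2 - b1*b3*z*u^3 - b1*b3*z*w*u^2 - b1*b3*y*z*u^2 - b1*b3*c*u^3 - b1*b3*c*w*u^2 - b1*b3*c*y*u^2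 - b1*b2 - b1*b2*u^2 - b1*b2*w*u - b1*b2*w^2 - b1*b2*c*u - 2*b1*b2*c*w*u^2 - b1*b2*c*w^2*u - b1*b2*c^2 - b1*b2*c^2*w*u - b1*b2*c^2*w^2 - b1^2 - b1^2*w^2 - b1^2*z*u - b1^2*z*w*u^2 - b1^2*z*w^2*u - b1^2*c*u - b1^2*c*w*u^2 - b1^2*c*w^2*u - b*b3 - b*b3*u^2 - b*b3*z*u - b*b3*z^2 - b*b3*y*u - 2*b*b3*y*z*u^2 - b*b3*y*z^2*u - b*b3*y^2 - b*b3*y^2*z*u - b*b3*y^2*z^2 - b*b2*u^2 - b*b2*w*u^3 - b*b2*z*w*u^2 - b*b2*y*u^3 - b*b2*y*z*u^2 - b*b2*c*w*u^2 - b*b2*c*y*u^2 - b*b1 - b*b1*u^2 - b*b1*w*u - b*b1*w^2 - b*b1*z*u - 2*b*b1*z*w*u^2 - b*b1*z*w^2*u - b*b1*z^2 - b*b1*z^2*w*u - b*b1*z^2*w^2 - b^2 - b^2*w*u - b^2*z*w*u^2 - b^2*z^2 - b^2*z^2*w*u - b^2*y*u - b^2*y*z*u^2 - b^2*y*z^2*u)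 * h2 + ((0:K) - 2*b3^2*y*w - 2*b3^2*y^2 - b2*b3*u^2 - 2*b2*b3*y*u - 2*b2*b3*y*w - 2*b2*b3*y^2 - b2^2*u^2 - 2*b2^2*w*u - b2^2*w^2 - 2*b2^2*y*u - 2*b2^2*y*w - b2^2*y^2 - 2*b1*b3*u^2 - b1*b2*u^2 - 2*b1*b2*w*u - 2*b1*b2*w^2 - 2*b1*b2*y*w - 2*b1^2*w^2 - 2*b1^2*y*w - b*b3*u^2 - 2*b*b3*y*u - 2*b*b3*y*w - 2*b*b3*y^2 - b*b1*u^2 - 2*b*b1*w*u - 2*b*b1*w^2 - 2*b*b1*y*w - b^2*u^2 - 2*b^2*w*u - b^2*w^2 - 2*b^2*y*u - 2*b^2*y*w - b^2*y^2) * hxz + ((0:K) - 2*b3^2 - b3^2*u^2 - 2*b3^2*z*u - b3^2*z^2 - 2*b3^2*c*u - b3^2*c^2 - 2*b2*b3 - b2*b3*u^2 - 2*b2*b3*c*u - 2*b2*b3*c^2 - 2*b2^2 - 2*b2^2*c^2 - 2*b1*b2 - b1*b2*u^2 - 2*b1*b2*c*u - 2*b1*b2*c^2 - 2*b1^2 -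 b1^2*u^2 - 2*b1^2*z*u - b1^2*z^2 - 2*b1^2*c*u - b1^2*c^2 - 2*b*b3 - b*b3*u^2 - 2*b*b3*z*u - 2*b*b3*z^2 - 2*b*b2*u^2 - 2*b*b1 - b*b1*u^2 - 2*b*b1*z*u - 2*b*b1*z^2 - 2*b^2 - 2*b^2*z^2) * hyw
end
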